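/- arXiv:1806.06039 — 12 statements merged into one kernel-verified Lean document; each statement's English description precedes it below -/
import Mathlib

section
/- Let A ∈ B^{n×n} be a matrix over the max-min algebra. For each i ∈ {1,...,n}, the vector min((A^+)_{ii}, ·) applied entrywise to the i-th column of A^*, i.e. the vector with entries min((A^+)_{ii}, (A^*)_{ki}) for k = 1,...,n, is a principal eigenvector of A, i.e. satisfies A ⊗ x = x. -/
noncomputable section

/-- The max-min algebra: the unit interval `[0,1] ⊆ ℝ` with `⊕ = max = ⊔` and `⊗ = min = ⊓`. -/
abbrev B : Type := unitInterval

instance : Fact ((0:ℝ) ≤ 1) := ⟨zero_le_one⟩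

/-- Max-min matrix-vector product: `(A ⊗ x)_i = max_j min (A i j) (x j)`. -/
def mmVec {α β : Type*} (A : Matrix α β B) (x : β → B) : α → B :=
  fun i => ⨆ j, A i j ⊓ x j

/-- Max-min matrix-matrix product. -/
def mmMul {α β γ : Type*} (A : Matrix α β B) (C : Matrix β γ B) : Matrix α γ B :=
  fun i k => ⨆ j, A i j ⊓ C j k

/-- The max-min identity matrix. -/
def mmId (α : Type*) [DecidableEq α] : Matrix α α B :=
  fun i j => if i = j then 1 else 0

/-- Max-min matrix powers, `A^0 = I`. -/
def mmPow {α : Type*} [DecidableEq α] (A : Matrix α α B) : ℕ → Matrix α α B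
  | 0 => mmId α
  | k + 1 => mmMul A (mmPow A k)

/-- The metric matrix `A⁺ = A ⊕ A² ⊕ ... ⊕ Aⁿ`. -/
def mmPlus {α : Type*} [Fintype α] [DecidableEq α] (A : Matrix α α B) : Matrix α α B :=
  fun i j => ⨆ k ∈ Finset.Icc 1 (Fintype.card α), mmPow A k i j

/-- The Kleene star `A* = I ⊕ A ⊕ ... ⊕ A^{n-1}`. -/
def mmStar {α : Type*} [Fintype α] [DecidableEq α] (A : Matrix α α B) : Matrix α α B :=
  fun i j => ⨆ k ∈ Finset.range (Fintype.card α), mmPow A k i j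

namespace MaxMinAux

lemma one_eq_top : (1 : B) = ⊤ := rfl
lemma zero_eq_bot : (0 : B) = ⊥ := rfl

variable {n : ℕ} (A : Matrix (Fin n) (Fin n) B)

lemma mmPow_succ_apply (m : ℕ) (k j : Fin n) :
    mmPow A (m+1) k j = ⨆ l, A k l ⊓ mmPow A m l j := rfl

/-- Weight of a walk of length `m` along `p`. -/
def W (m : ℕ) (p : ℕ → Fin n) : B := ⨅ t ∈ Finset.range m, A (p t) (p (t+1))

lemma W_le_pow : ∀ (m : ℕ) (p : ℕ → Fin n), W A m p ≤ mmPow A m (p 0) (p m) := by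
  intro m
  induction m with
  | zero =>
    intro p
    have h : mmPow A 0 (p 0) (p 0) = ⊤ := by simp [mmPow, mmId, one_eq_top]
    simp only [h]; exact le_top
  | succ m ih =>
    intro p
    have h1 : W A (m+1) p ≤ A (p 0) (p 1) :=
      iInf₂_le 0 (Finset.mem_range.mpr (Nat.succ_pos m))
    have h2 : W A (m+1) p ≤ W A m (fun t => p (t+1)) := by
      refine le_iInf₂ fun t ht => ?_
      exact iInf₂_le (t+1) (Finset.mem_range.mpr (by
        have := Finset.mem_range.mp ht; omega))
    have h3 := ih (fun t => p (t+1))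
    rw [mmPow_succ_apply]
    calc W A (m+1) p ≤ A (p 0) (p 1) ⊓ mmPow A m (p 1) (p (m+1)) :=
          le_inf h1 (h2.trans h3)
      _ ≤ ⨆ l, A (p 0) l ⊓ mmPow A m l (p (m+1)) :=
          le_iSup (fun l => A (p 0) l ⊓ mmPow A m l (p (m+1))) (p 1)

lemma pow_le_supW : ∀ (m : ℕ) (k j : Fin n),
    mmPow A m k j ≤ ⨆ p : ℕ → Fin n, ⨆ _ : p 0 = k ∧ p m = j, W A m p := by
  intro m
  induction m with
  | zero =>
    intro k j
    by_cases h : k = j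
    · subst h
      have hW : W A 0 (fun _ => k) = ⊤ := by simp [W]
      have := le_iSup₂ (f := fun (p : ℕ → Fin n) (_ : p 0 = k ∧ p 0 = k) => W A 0 p)
        (fun _ => k) ⟨rfl, rfl⟩
      rw [hW] at this
      exact le_trans le_top this
    · have : mmPow A 0 k j = ⊥ := by simp [mmPow, mmId, h, zero_eq_bot]
      rw [this]; exact bot_le
  | succ m ih =>
    intro k j
    rw [mmPow_succ_apply]
    refine iSup_le fun l => ?_
    have step : ∀ p : ℕ → Fin n, p 0 = l ∧ p m = j →
        A k l ⊓ W A m p ≤ ⨆ q : ℕ → Fin n, ⨆ _ : q 0 = k ∧ q (m+1) = j, W A (m+1) q := by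
      intro p hp
      set q : ℕ → Fin n := fun t => if t = 0 then k else p (t-1) with hqdef
      have hq0 : q 0 = k := by simp [q]
      have hqm : q (m+1) = j := by
        simp only [q]
        rw [if_neg (Nat.succ_ne_zero m)]
        simpa using hp.2
      have hW : A k l ⊓ W A m p ≤ W A (m+1) q := by
        refine le_iInf₂ fun t ht => ?_
        rcases Nat.eq_zero_or_pos t with h0 | h0
        · subst h0
          have e1 : q 0 = k := hq0
          have e2 : q 1 = l := by simp [q, hp.1]
          rw [e1, e2]; exact inf_le_left
        · obtain ⟨s, rfl⟩ := Nat.exists_eq_succ_of_ne_zero (Nat.pos_iff_ne_zero.mp h0)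
          have e1 : q (s+1) = p s := by simp [q]
          have e2 : q (s+1+1) = p (s+1) := by simp [q]
          rw [e1, e2]
          refine inf_le_right.trans (iInf₂_le s (Finset.mem_range.mpr ?_))
          have := Finset.mem_range.mp ht; omega
      exact hW.trans (le_iSup₂ (f := fun (q : ℕ → Fin n) (_ : q 0 = k ∧ q (m+1) = j) => W A (m+1) q) q ⟨hq0, hqm⟩)
    calc A k l ⊓ mmPow A m l j
        ≤ A k l ⊓ ⨆ p : ℕ → Fin n, ⨆ _ : p 0 = l ∧ p m = j, W A m p :=
          inf_le_inf_left _ (ih l j)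
      _ = ⨆ p : ℕ → Fin n, ⨆ _ : p 0 = l ∧ p m = j, A k l ⊓ W A m p := by
          simp_rw [inf_iSup_eq]
      _ ≤ _ := iSup₂_le step

lemma W_surgery (m s t : ℕ) (hst : s < t) (htm : t ≤ m) (p : ℕ → Fin n) (hp : p s = p t) :
    ∃ q : ℕ → Fin n, q 0 = p 0 ∧ q (m - (t - s)) = p m ∧ W A m p ≤ W A (m - (t - s)) q := by
  set d := t - s with hd
  refine ⟨fun u => if u ≤ s then p u else p (u + d), by simp, ?_, ?_⟩
  · by_cases h : m - d ≤ s
    · simp only [if_pos h]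
      have hms : m - d = s := by omega
      have hmt : t = m := by omega
      rw [hms, hp, hmt]
    · simp only [if_neg h]
      congr 1
      omega
  · refine le_iInf₂ fun u hu => ?_
    have hu' : u < m - d := Finset.mem_range.mp hu
    by_cases h1 : u ≤ s
    · by_cases h2 : u + 1 ≤ s
      · simp only [if_pos h1, if_pos h2]
        exact iInf₂_le u (Finset.mem_range.mpr (by omega))
      · have hus : u = s := by omega
        simp only [if_pos h1, if_neg h2]
        subst hus
        rw [hp]
        have e : u + 1 + d = t + 1 := by omega
        rw [e]
        exact iInf₂_le t (Finset.mem_range.mpr (by omega))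
    · have h2 : ¬ u + 1 ≤ s := by omega
      simp only [if_neg h1, if_neg h2]
      have e : u + 1 + d = (u + d) + 1 := by omega
      rw [e]
      exact iInf₂_le (u + d) (Finset.mem_range.mpr (by omega))

lemma W_le_star : ∀ (m : ℕ) (p : ℕ → Fin n), W A m p ≤ mmStar A (p 0) (p m) := by
  intro m
  induction m using Nat.strong_induction_on with
  | _ m ih =>
    intro p
    by_cases hm : m < Fintype.card (Fin n)
    · exact (W_le_pow A m p).trans
        (le_iSup₂ (f := fun k (_ : k ∈ Finset.range (Fintype.card (Fin n))) =>
          mmPow A k (p 0) (p m)) m (Finset.mem_range.mpr hm))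
    · push_neg at hm
      have hcard : Fintype.card (Fin n) < Fintype.card (Fin (m+1)) := by
        simp only [Fintype.card_fin] at hm ⊢; omega
      obtain ⟨a, b, hab, hpe⟩ :=
        Fintype.exists_ne_map_eq_of_card_lt (fun x : Fin (m+1) => p x.val) hcard
      have key : ∀ s t : ℕ, s < t → t ≤ m → p s = p t →
          W A m p ≤ mmStar A (p 0) (p m) := by
        intro s t hst htm hpe'
        obtain ⟨q, hq0, hqm, hW⟩ := W_surgery A m s t hst htm p hpe'
        have hlt : m - (t - s) < m := by omega
        have := ih (m - (t - s)) hlt q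
        rw [hq0, hqm] at this
        exact hW.trans this
      rcases hab.lt_or_gt with h | h
      · exact key a.val b.val h (Nat.lt_succ_iff.mp b.isLt) hpe
      · exact key b.val a.val h (Nat.lt_succ_iff.mp a.isLt) hpe.symm

lemma pow_le_star (m : ℕ) (k j : Fin n) : mmPow A m k j ≤ mmStar A k j := by
  refine (pow_le_supW A m k j).trans (iSup₂_le fun p hp => ?_)
  have := W_le_star A m p
  rwa [hp.1, hp.2] at this

lemma main_ge (i k : Fin n) (m : ℕ) :
    mmPlus A i i ⊓ mmPow A (m+1) k i ≤
      ⨆ j, A k j ⊓ (mmPlus A i i ⊓ mmStar A j i) := by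
  rw [mmPow_succ_apply, inf_iSup_eq]
  refine iSup_le fun j => ?_
  refine le_trans ?_ (le_iSup _ j)
  refine le_inf (inf_le_right.trans inf_le_left) (le_inf inf_le_left ?_)
  exact inf_le_right.trans (inf_le_right.trans (pow_le_star A m j i))

end MaxMinAux

open MaxMinAux in
/-- For each `i`, the vector with entries `min ((A⁺)_{ii}, (A*)_{ki})`,
`k = 1,...,n`, is a principal eigenvector of `A`, i.e. satisfies `A ⊗ x = x`. -/
theorem stmt2 {n : ℕ} (A : Matrix (Fin n) (Fin n) B) (i : Fin n) :
    mmVec A (fun k => mmPlus A i i ⊓ mmStar A k i) = fun k => mmPlus A i i ⊓ mmStar A k i := by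
  funext k
  show (⨆ j, A k j ⊓ (mmPlus A i i ⊓ mmStar A j i)) = mmPlus A i i ⊓ mmStar A k i
  apply le_antisymm
  · refine iSup_le fun j => ?_
    refine le_inf (inf_le_right.trans inf_le_left) ?_
    -- A k j ⊓ (c ⊓ S j i) ≤ S k i
    have h : A k j ⊓ mmStar A j i ≤ mmStar A k i := by
      rw [mmStar]
      simp_rw [inf_iSup_eq]
      refine iSup₂_le fun m _ => ?_
      have h1 : A k j ⊓ mmPow A m j i ≤ mmPow A (m+1) k i := by
        rw [mmPow_succ_apply]
        exact le_iSup (fun l => A k l ⊓ mmPow A m l i) j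
      exact h1.trans (pow_le_star A (m+1) k i)
    exact (inf_le_inf_left _ inf_le_right).trans h
  · rw [mmStar]
    simp_rw [inf_iSup_eq]
    refine iSup₂_le fun m _ => ?_
    rcases Nat.eq_zero_or_pos m with h0 | h0
    · subst h0
      by_cases hk : k = i
      · subst hk
        have e : mmPow A 0 k k = ⊤ := by simp [mmPow, mmId, one_eq_top]
        rw [e, inf_top_eq]
        -- c ≤ RHS
        rw [mmPlus]
        refine iSup₂_le fun m hm => ?_
        obtain ⟨hm1, _⟩ := Finset.mem_Icc.mp hm
        obtain ⟨m', rfl⟩ := Nat.exists_eq_succ_of_ne_zero (Nat.one_le_iff_ne_zero.mp hm1)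
        have hle : mmPow A (m'+1) k k ≤ mmPlus A k k := by
          rw [mmPlus]
          exact le_iSup₂ (f := fun l (_ : l ∈ Finset.Icc 1 (Fintype.card (Fin n))) =>
            mmPow A l k k) (m'+1) hm
        exact (le_inf hle le_rfl).trans (main_ge A k k m')
      · have e : mmPow A 0 k i = ⊥ := by simp [mmPow, mmId, hk, zero_eq_bot]
        rw [e, inf_bot_eq]
        exact bot_le
    · obtain ⟨m', rfl⟩ := Nat.exists_eq_succ_of_ne_zero h0.ne'
      exact main_ge A i k m'
end
end

section
/- Let A ∈ B^{n×n} be a matrix over the max-min algebra. The set of principal eigenvectors of A (vectors x with A ⊗ x = x) equals the max-min column space generated by the vectors min((A^+)_{ii}, ·) ⊗ (A^*)_{·i}: that is, x satisfies A ⊗ x = x if and only if there exists y ∈ B^n such that x_k = max_{1≤i≤n} min(y_i, (A^+)_{ii}, (A^*)_{ki}) for all k. Moreover, for every principal eigenvector x one may take y = x, i.e. x_k = max_{1≤i≤n} min(x_i, (A^+)_{ii}, (A^*)_{ki}) for all k. -/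
noncomputable section

namespace MM3
@[simp] lemma one_top : (1 : B) = ⊤ := rfl
@[simp] lemma zero_bot : (0 : B) = ⊥ := rfl
variable {n : ℕ} (A : Matrix (Fin n) (Fin n) B)

def wv : Fin n → List (Fin n) → B
  | _, [] => 1
  | k, j :: l => A k j ⊓ wv j l

@[simp] lemma wv_nil (k : Fin n) : wv A k [] = ⊤ := rfl
@[simp] lemma wv_cons (k j : Fin n) (l : List (Fin n)) :
    wv A k (j :: l) = A k j ⊓ wv A j l := rfl

lemma wv_append (k i : Fin n) (l₁ l₂ : List (Fin n)) :
    wv A k (l₁ ++ i :: l₂) = wv A k (l₁ ++ [i]) ⊓ wv A i l₂ := by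
  induction l₁ generalizing k with
  | nil => simp [inf_assoc]
  | cons a t ih => simp [ih a, inf_assoc]

lemma pow_eq_sup (m : ℕ) (k j : Fin n) :
    mmPow A (m+1) k j = ⨆ p : Fin m → Fin n, wv A k (List.ofFn p ++ [j]) := by
  induction m generalizing k with
  | zero =>
    show mmMul A (mmId _) k j = _
    simp only [mmMul, mmId, List.ofFn_zero, List.nil_append, wv_cons, wv_nil]
    rw [iSup_unique (f := fun _ : Fin 0 → Fin n => A k j ⊓ (⊤:B)), inf_top_eq]
    apply le_antisymm
    · apply iSup_le; intro t
      by_cases h : t = j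
      · subst h; simp
      · simp [h]
    · exact le_iSup_of_le j (by simp)
  | succ m ih =>
    show mmMul A (mmPow A (m+1)) k j = _
    simp only [mmMul, ih, inf_iSup_eq]
    apply le_antisymm
    · apply iSup_le; intro t; apply iSup_le; intro p
      refine le_iSup_of_le (Fin.cons t p) ?_
      rw [List.ofFn_succ]
      simp [Fin.cons_succ]
    · apply iSup_le; intro q
      refine le_iSup_of_le (q 0) (le_iSup_of_le (fun i => q i.succ) ?_)
      rw [List.ofFn_succ]
      simp

lemma wv_le_pow (k j : Fin n) (l : List (Fin n)) :
    wv A k (l ++ [j]) ≤ mmPow A (l.length + 1) k j := by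
  rw [pow_eq_sup]
  refine le_iSup_of_le l.get ?_
  rw [List.ofFn_get]

lemma pow_le_star {m : ℕ} (h : m < n) (k j : Fin n) :
    mmPow A m k j ≤ mmStar A k j := by
  unfold mmStar
  exact le_iSup₂_of_le m (by simpa using h) le_rfl

lemma pow_le_plus {m : ℕ} (h1 : 1 ≤ m) (h2 : m ≤ n) (k j : Fin n) :
    mmPow A m k j ≤ mmPlus A k j := by
  unfold mmPlus
  exact le_iSup₂_of_le m (by simp [h1, h2]) le_rfl

lemma star_diag (i : Fin n) : mmStar A i i = ⊤ := by
  apply le_antisymm le_top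
  have h0 : mmPow A 0 i i = ⊤ := by simp [mmPow, mmId]
  calc (⊤:B) = mmPow A 0 i i := h0.symm
    _ ≤ mmStar A i i := pow_le_star A i.pos i i

lemma exists_dup {α : Type*} : ∀ (l : List α), ¬ l.Nodup →
    ∃ (l₁ : List α) (a : α) (l₂ l₃ : List α), l = l₁ ++ a :: l₂ ++ a :: l₃ := by
  intro l
  induction l with
  | nil => intro h; exact absurd List.nodup_nil h
  | cons b t ih =>
    intro h
    by_cases hb : b ∈ t
    · obtain ⟨s, u, rfl⟩ := List.append_of_mem hb
      exact ⟨[], b, s, u, rfl⟩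
    · have ht : ¬ t.Nodup := fun hn => h (List.nodup_cons.mpr ⟨hb, hn⟩)
      obtain ⟨l₁, a, l₂, l₃, rfl⟩ := ih ht
      exact ⟨b :: l₁, a, l₂, l₃, rfl⟩

lemma pow_card_le_star (k i : Fin n) : mmPow A n k i ≤ mmStar A k i := by
  obtain ⟨m, hm⟩ : ∃ m, n = m + 1 := ⟨n - 1, (Nat.succ_pred_eq_of_pos k.pos).symm⟩
  subst hm
  rw [pow_eq_sup]
  apply iSup_le; intro p
  have hnd : ¬ (k :: (List.ofFn p ++ [i])).Nodup := by
    intro h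
    have := h.length_le_card
    simp at this
  obtain ⟨l₁, a, l₂, l₃, he⟩ := exists_dup _ hnd
  cases l₁ with
  | nil =>
    simp only [List.nil_append] at he
    injection he with h1 he2
    subst h1
    simp only [List.append_eq] at he2
    rw [he2, wv_append A k k l₂ l₃]
    refine le_trans inf_le_right ?_
    rcases List.eq_nil_or_concat l₃ with rfl | ⟨l', c, rfl⟩
    · obtain ⟨-, hik⟩ := List.append_inj' he2 rfl
      have hik' : i = k := by injection hik
      subst hik'
      simp [star_diag]
    · rw [List.concat_eq_append] at he2 ⊢
      have he2' : List.ofFn p ++ [i] = (l₂ ++ k :: l') ++ [c] := by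
        rw [he2]; simp
      obtain ⟨h3, h4⟩ := List.append_inj' he2' rfl
      have hci : i = c := by injection h4
      subst hci
      refine le_trans (wv_le_pow A k i l') (pow_le_star A ?_ k i)
      have := congrArg List.length h3
      simp only [List.length_ofFn, List.length_append, List.length_cons] at this ⊢
      omega
  | cons b l₁' =>
    simp only [List.cons_append] at he
    injection he with h1 he2
    subst h1
    try simp only [List.append_eq] at he2
    simp only [List.cons_append, List.append_assoc] at he2
    rw [he2, wv_append A k a l₁' (l₂ ++ a :: l₃), wv_append A a a l₂ l₃]
    have step : wv A k (l₁' ++ [a]) ⊓ (wv A a (l₂ ++ [a]) ⊓ wv A a l₃)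
        ≤ wv A k (l₁' ++ a :: l₃) := by
      rw [wv_append A k a l₁' l₃]
      exact inf_le_inf_left (wv A k (l₁' ++ [a])) inf_le_right
    refine le_trans step ?_
    rcases List.eq_nil_or_concat l₃ with rfl | ⟨l', c, rfl⟩
    · have he2' : List.ofFn p ++ [i] = (l₁' ++ a :: l₂) ++ [a] := by
        rw [he2]; simp
      obtain ⟨h3, h4⟩ := List.append_inj' he2' rfl
      have hai : i = a := by injection h4
      subst hai
      refine le_trans (wv_le_pow A k i l₁') (pow_le_star A ?_ k i)
      have := congrArg List.length h3
      simp only [List.length_ofFn, List.length_append, List.length_cons] at this ⊢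
      omega
    · rw [List.concat_eq_append] at he2 ⊢
      have he2' : List.ofFn p ++ [i] = (l₁' ++ a :: l₂ ++ a :: l') ++ [c] := by
        rw [he2]; simp
      obtain ⟨h3, h4⟩ := List.append_inj' he2' rfl
      have hci : i = c := by injection h4
      subst hci
      have hre : l₁' ++ a :: (l' ++ [i]) = (l₁' ++ a :: l') ++ [i] := by simp
      rw [hre]
      refine le_trans (wv_le_pow A k i _) (pow_le_star A ?_ k i)
      have := congrArg List.length h3
      simp only [List.length_ofFn, List.length_append, List.length_cons] at this ⊢
      omega



lemma mmVec_id (x : Fin n → B) : mmVec (mmId (Fin n)) x = x := by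
  funext i
  simp only [mmVec, mmId]
  apply le_antisymm
  · apply iSup_le; intro j
    by_cases h : i = j
    · subst h; simp
    · simp [h]
  · exact le_iSup_of_le i (by simp)

lemma mmVec_mmMul (C : Matrix (Fin n) (Fin n) B) (x : Fin n → B) :
    mmVec (mmMul A C) x = mmVec A (mmVec C x) := by
  funext i
  simp only [mmVec, mmMul, iSup_inf_eq, inf_iSup_eq]
  rw [iSup_comm]
  exact iSup_congr fun t => iSup_congr fun j => inf_assoc ..

lemma eigen_pow {x : Fin n → B} (hx : mmVec A x = x) :
    ∀ m, mmVec (mmPow A m) x = x := by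
  intro m
  induction m with
  | zero => exact mmVec_id x
  | succ m ih => show mmVec (mmMul A (mmPow A m)) x = x; rw [mmVec_mmMul, ih, hx]

lemma pow_inf_le {x : Fin n → B} (hx : mmVec A x = x) (m : ℕ) (k i : Fin n) :
    mmPow A m k i ⊓ x i ≤ x k := by
  conv_rhs => rw [← eigen_pow A hx m]
  exact le_iSup (fun j => mmPow A m k j ⊓ x j) i

lemma suffix_bound {x : Fin n → B} (hx : mmVec A x = x) (a j : Fin n)
    (l' : List (Fin n)) : wv A a (l' ++ [j]) ⊓ x j ≤ x a :=
  le_trans (inf_le_inf_right _ (wv_le_pow A a j l')) (pow_inf_le A hx _ a j)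

lemma eigen_le_sup {x : Fin n → B} (hx : mmVec A x = x) (k : Fin n) :
    x k ≤ ⨆ i, x i ⊓ mmPlus A i i ⊓ mmStar A k i := by
  obtain ⟨m, hm⟩ : ∃ m, n = m + 1 := ⟨n - 1, (Nat.succ_pred_eq_of_pos k.pos).symm⟩
  subst hm
  conv_lhs => rw [← eigen_pow A hx (m+1)]
  show ⨆ j, mmPow A (m+1) k j ⊓ x j ≤ _
  apply iSup_le; intro j
  rw [pow_eq_sup, iSup_inf_eq]
  apply iSup_le; intro p
  have hnd : ¬ (k :: (List.ofFn p ++ [j])).Nodup := by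
    intro h
    have := h.length_le_card
    simp at this
  obtain ⟨l₁, a, l₂, l₃, he⟩ := exists_dup _ hnd
  cases l₁ with
  | nil =>
    simp only [List.nil_append] at he
    injection he with h1 he2
    subst h1
    try simp only [List.append_eq] at he2
    have hlen := congrArg List.length he2
    simp at hlen
    rw [he2, wv_append A k k l₂ l₃]
    have h2 : wv A k (l₂ ++ [k]) ⊓ wv A k l₃ ⊓ x j ≤ mmPlus A k k := by
      refine le_trans inf_le_left (le_trans inf_le_left ?_)
      refine le_trans (wv_le_pow A k k l₂) (pow_le_plus A (by omega) (by omega) k k)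
    have h1 : wv A k (l₂ ++ [k]) ⊓ wv A k l₃ ⊓ x j ≤ x k := by
      refine le_trans (inf_le_inf_right _ inf_le_right) ?_
      rcases List.eq_nil_or_concat l₃ with rfl | ⟨l', c, rfl⟩
      · obtain ⟨-, hjk⟩ := List.append_inj' he2 rfl
        have hjk' : j = k := by injection hjk
        subst hjk'
        simp
      · rw [List.concat_eq_append] at he2 ⊢
        have he2' : List.ofFn p ++ [j] = (l₂ ++ k :: l') ++ [c] := by
          rw [he2]; simp
        obtain ⟨h3, h4⟩ := List.append_inj' he2' rfl
        have hcj : j = c := by injection h4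
        subst hcj
        exact suffix_bound A hx k j l'
    refine le_iSup_of_le k (le_inf (le_inf h1 h2) ?_)
    rw [star_diag]
    exact le_top
  | cons b l₁' =>
    simp only [List.cons_append] at he
    injection he with h1 he2
    subst h1
    try simp only [List.append_eq] at he2
    simp only [List.cons_append, List.append_assoc] at he2
    have hlen := congrArg List.length he2
    simp at hlen
    rw [he2, wv_append A k a l₁' (l₂ ++ a :: l₃), wv_append A a a l₂ l₃]
    have h3 : wv A k (l₁' ++ [a]) ⊓ (wv A a (l₂ ++ [a]) ⊓ wv A a l₃) ⊓ x j
        ≤ mmStar A k a := by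
      refine le_trans inf_le_left (le_trans inf_le_left ?_)
      exact le_trans (wv_le_pow A k a l₁') (pow_le_star A (by omega) k a)
    have h2 : wv A k (l₁' ++ [a]) ⊓ (wv A a (l₂ ++ [a]) ⊓ wv A a l₃) ⊓ x j
        ≤ mmPlus A a a := by
      refine le_trans inf_le_left (le_trans inf_le_right (le_trans inf_le_left ?_))
      exact le_trans (wv_le_pow A a a l₂) (pow_le_plus A (by omega) (by omega) a a)
    have h1 : wv A k (l₁' ++ [a]) ⊓ (wv A a (l₂ ++ [a]) ⊓ wv A a l₃) ⊓ x j
        ≤ x a := by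
      refine le_trans (inf_le_inf_right _ (le_trans inf_le_right inf_le_right)) ?_
      rcases List.eq_nil_or_concat l₃ with rfl | ⟨l', c, rfl⟩
      · have he2' : List.ofFn p ++ [j] = (l₁' ++ a :: l₂) ++ [a] := by
          rw [he2]; simp
        obtain ⟨-, h4⟩ := List.append_inj' he2' rfl
        have haj : j = a := by injection h4
        subst haj
        simp
      · rw [List.concat_eq_append]
        have he2' : List.ofFn p ++ [j] = (l₁' ++ a :: l₂ ++ a :: l') ++ [c] := by
          rw [he2]; simp
        obtain ⟨-, h4⟩ := List.append_inj' he2' rfl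
        have hcj : j = c := by injection h4
        subst hcj
        exact suffix_bound A hx a j l'
    exact le_iSup_of_le a (le_inf (le_inf h1 h2) h3)

lemma plus_le_star (k i : Fin n) : mmPlus A k i ≤ mmStar A k i := by
  unfold mmPlus
  apply iSup₂_le; intro m hm
  simp only [Finset.mem_Icc, Fintype.card_fin] at hm
  rcases Nat.lt_or_ge m n with h | h
  · exact pow_le_star A h k i
  · have : m = n := le_antisymm hm.2 h
    subst this
    exact pow_card_le_star A k i

lemma mul_star_plus (k i : Fin n) :
    (⨆ t, A k t ⊓ mmStar A t i) = mmPlus A k i := by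
  apply le_antisymm
  · apply iSup_le; intro t
    unfold mmStar
    simp only [inf_iSup_eq]
    apply iSup₂_le; intro m hm
    simp only [Finset.mem_range, Fintype.card_fin] at hm
    have hle : A k t ⊓ mmPow A m t i ≤ mmPow A (m+1) k i := by
      show _ ≤ mmMul A (mmPow A m) k i
      exact le_iSup (fun t' => A k t' ⊓ mmPow A m t' i) t
    exact le_trans hle (pow_le_plus A (Nat.le_add_left 1 m) hm k i)
  · unfold mmPlus
    apply iSup₂_le; intro m hm
    simp only [Finset.mem_Icc, Fintype.card_fin] at hm
    obtain ⟨m, rfl⟩ : ∃ m', m = m' + 1 := ⟨m - 1, (Nat.succ_pred_eq_of_pos hm.1).symm⟩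
    show mmMul A (mmPow A m) k i ≤ _
    unfold mmMul
    apply iSup_le; intro t
    refine le_iSup_of_le t (inf_le_inf_left _ ?_)
    exact pow_le_star A (by omega) t i

lemma plus_diag_inf (i k : Fin n) :
    mmPlus A i i ⊓ mmPlus A k i = mmPlus A i i ⊓ mmStar A k i := by
  apply le_antisymm
  · exact le_inf inf_le_left (le_trans inf_le_right (plus_le_star A k i))
  · refine le_inf inf_le_left ?_
    rw [inf_comm]
    unfold mmStar
    simp only [iSup_inf_eq]
    apply iSup₂_le; intro m hm
    simp only [Finset.mem_range, Fintype.card_fin] at hm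
    cases m with
    | zero =>
      show mmId (Fin n) k i ⊓ _ ≤ _
      by_cases hki : k = i
      · subst hki; simp [mmId]
      · simp [mmId, hki]
    | succ m =>
      exact le_trans inf_le_left (pow_le_plus A (Nat.le_add_left 1 m) hm.le k i)

lemma main2 {x : Fin n → B} (hx : mmVec A x = x) (k : Fin n) :
    x k = ⨆ i, x i ⊓ mmPlus A i i ⊓ mmStar A k i := by
  apply le_antisymm (eigen_le_sup A hx k)
  apply iSup_le; intro i
  refine le_trans (inf_le_inf_right _ inf_le_left) ?_
  rw [inf_comm]
  unfold mmStar
  simp only [iSup_inf_eq]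
  apply iSup₂_le; intro m hm
  exact pow_inf_le A hx m k i

lemma main1 {x y : Fin n → B}
    (hy : ∀ k, x k = ⨆ i, y i ⊓ mmPlus A i i ⊓ mmStar A k i) :
    mmVec A x = x := by
  funext k
  show ⨆ t, A k t ⊓ x t = x k
  simp only [hy, inf_iSup_eq]
  rw [iSup_comm]
  refine iSup_congr fun i => ?_
  have hac : ∀ t, A k t ⊓ (y i ⊓ mmPlus A i i ⊓ mmStar A t i)
      = (y i ⊓ mmPlus A i i) ⊓ (A k t ⊓ mmStar A t i) := fun t => by
    simp [inf_assoc, inf_comm, inf_left_comm]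
  simp only [hac]
  rw [← inf_iSup_eq, mul_star_plus A k i, inf_assoc, inf_assoc, plus_diag_inf A i k]

end MM3

/-- The set of principal eigenvectors of `A` is the max-min column space
generated by the vectors `min ((A⁺)_{ii}, ·) ⊗ (A*)_{·i}`: `A ⊗ x = x` iff there is `y` with
`x k = max_i min (y i, (A⁺)_{ii}, (A*)_{ki})` for all `k`; moreover, for a principal
eigenvector `x` one may take `y = x`. -/
theorem stmt3 {n : ℕ} (A : Matrix (Fin n) (Fin n) B) (x : Fin n → B) :
    (mmVec A x = x ↔
      ∃ y : Fin n → B, ∀ k, x k = ⨆ i, y i ⊓ mmPlus A i i ⊓ mmStar A k i) ∧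
    (mmVec A x = x →
      ∀ k, x k = ⨆ i, x i ⊓ mmPlus A i i ⊓ mmStar A k i) := by
  exact ⟨⟨fun hx => ⟨x, MM3.main2 A hx⟩, fun ⟨_, hy⟩ => MM3.main1 A hy⟩,
    fun hx => MM3.main2 A hx⟩
end
end

section
/- Let A ∈ B^{n×n} and b ∈ B^n over the max-min algebra. The Bellman equation x = A ⊗ x ⊕ b always has a solution, and its solution set equals { A^* ⊗ b ⊕ v : v ∈ B^n, A ⊗ v = v }: every vector of the form A^* ⊗ b ⊕ v with A ⊗ v = v satisfies x = A ⊗ x ⊕ b, and conversely every solution x of x = A ⊗ x ⊕ b can be written as x = A^* ⊗ b ⊕ v for some v with A ⊗ v = v. -/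
noncomputable section

namespace Aux

variable {n : ℕ}

lemma B_one_eq_top : (1 : B) = ⊤ := rfl
lemma B_zero_eq_bot : (0 : B) = ⊥ := rfl

lemma id_vec (x : Fin n → B) : mmVec (mmId (Fin n)) x = x := by
  funext i
  apply le_antisymm
  · refine iSup_le fun j => ?_
    by_cases h : i = j
    · subst h; simp [mmId, B_one_eq_top]
    · simp [mmId, h, B_zero_eq_bot]
  · refine le_iSup_of_le i ?_
    simp [mmId, B_one_eq_top]

lemma assoc_vec {α β γ : Type*} (P : Matrix α β B) (Q : Matrix β γ B) (x : γ → B) :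
    mmVec (mmMul P Q) x = mmVec P (mmVec Q x) := by
  funext i
  simp only [mmVec, mmMul, iSup_inf_eq, inf_iSup_eq]
  rw [iSup_comm]
  exact iSup_congr fun m => iSup_congr fun j => by rw [inf_assoc]

lemma vec_mono {α β : Type*} (A : Matrix α β B) {x y : β → B} (h : ∀ j, x j ≤ y j) (i : α) :
    mmVec A x i ≤ mmVec A y i :=
  iSup_mono fun j => inf_le_inf_left _ (h j)

lemma vec_sup {α β : Type*} (A : Matrix α β B) (u v : β → B) (i : α) :
    mmVec A (fun j => u j ⊔ v j) i = mmVec A u i ⊔ mmVec A v i := by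
  simp only [mmVec, inf_sup_left, iSup_sup_eq]

lemma succ_vec (A : Matrix (Fin n) (Fin n) B) (k : ℕ) (x : Fin n → B) :
    mmVec (mmPow A (k+1)) x = mmVec A (mmVec (mmPow A k) x) := by
  show mmVec (mmMul A (mmPow A k)) x = _
  rw [assoc_vec]

lemma shift_vec (A : Matrix (Fin n) (Fin n) B) (k : ℕ) (x : Fin n → B) :
    mmVec (mmPow A (k+1)) x = mmVec (mmPow A k) (mmVec A x) := by
  induction k with
  | zero =>
    show mmVec (mmPow A 1) x = mmVec (mmPow A 0) (mmVec A x)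
    rw [succ_vec]
    show mmVec A (mmVec (mmId (Fin n)) x) = mmVec (mmId (Fin n)) (mmVec A x)
    rw [id_vec, id_vec]
  | succ k ih => rw [succ_vec, ih, ← succ_vec]

lemma vec_biSup {α β : Type*} (A : Matrix α β B) (s : Finset ℕ) (g : ℕ → β → B) (i : α) :
    mmVec A (fun j => ⨆ k ∈ s, g k j) i = ⨆ k ∈ s, mmVec A (g k) i := by
  simp only [mmVec, inf_iSup_eq]
  rw [iSup_comm]
  exact iSup_congr fun k => iSup_comm

lemma star_vec (A : Matrix (Fin n) (Fin n) B) (b : Fin n → B) (i : Fin n) :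
    mmVec (mmStar A) b i = ⨆ k ∈ Finset.range n, mmVec (mmPow A k) b i := by
  simp only [mmVec, mmStar, Fintype.card_fin, iSup_inf_eq]
  rw [iSup_comm]
  exact iSup_congr fun k => iSup_comm

/-! ### Walks -/

def wval (A : Matrix (Fin n) (Fin n) B) (w : ℕ → Fin n) (k : ℕ) : B :=
  (Finset.range k).inf fun t => A (w t) (w (t+1))

lemma inf_range_succ' (g : ℕ → B) (k : ℕ) :
    (Finset.range (k+1)).inf g = g 0 ⊓ (Finset.range k).inf (fun t => g (t+1)) := by
  induction k with
  | zero => simp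
  | succ k ih =>
    rw [Finset.range_add_one, Finset.inf_insert, ih, Finset.range_add_one, Finset.inf_insert]
    rw [← inf_assoc, inf_comm (g (k+1)) (g 0), inf_assoc]

lemma wval_le_pow (A : Matrix (Fin n) (Fin n) B) :
    ∀ (k : ℕ) (w : ℕ → Fin n), wval A w k ≤ mmPow A k (w 0) (w k) := by
  intro k
  induction k with
  | zero =>
    intro w
    simp [wval, mmPow, mmId, B_one_eq_top]
  | succ k ih =>
    intro w
    have h1 : wval A w (k+1) = A (w 0) (w 1) ⊓ wval A (fun t => w (t+1)) k := by
      rw [wval, inf_range_succ']; rfl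
    rw [h1]
    calc A (w 0) (w 1) ⊓ wval A (fun t => w (t+1)) k
        ≤ A (w 0) (w 1) ⊓ mmPow A k (w 1) (w (k+1)) :=
          inf_le_inf_left _ (ih (fun t => w (t+1)))
      _ ≤ mmPow A (k+1) (w 0) (w (k+1)) := le_iSup_of_le (w 1) le_rfl

lemma pow_le (A : Matrix (Fin n) (Fin n) B) :
    ∀ (k : ℕ) (i j : Fin n),
      mmPow A k i j ≤ ⨆ (w : ℕ → Fin n), ⨆ (_ : w 0 = i ∧ w k = j), wval A w k := by
  intro k
  induction k with
  | zero =>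
    intro i j
    by_cases h : i = j
    · subst h
      refine le_iSup_of_le (fun _ => i) (le_iSup_of_le ⟨rfl, rfl⟩ ?_)
      simp [mmPow, mmId, wval, B_one_eq_top]
    · simp [mmPow, mmId, h, B_zero_eq_bot]
  | succ k ih =>
    intro i j
    show (⨆ m, A i m ⊓ mmPow A k m j) ≤ _
    refine iSup_le fun m => ?_
    calc A i m ⊓ mmPow A k m j
        ≤ A i m ⊓ ⨆ (w : ℕ → Fin n), ⨆ (_ : w 0 = m ∧ w k = j), wval A w k :=
          inf_le_inf_left _ (ih m j)
      _ = ⨆ (w : ℕ → Fin n), ⨆ (_ : w 0 = m ∧ w k = j), A i m ⊓ wval A w k := by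
          simp only [inf_iSup_eq]
      _ ≤ _ := by
          refine iSup_le fun w => iSup_le fun hw => ?_
          set w' : ℕ → Fin n := fun t => match t with | 0 => i | s+1 => w s with hw'
          have h0 : w' 0 = i := rfl
          have hk : w' (k+1) = j := hw.2
          refine le_iSup_of_le w' (le_iSup_of_le ⟨h0, hk⟩ ?_)
          have : wval A w' (k+1) = A i (w 0) ⊓ wval A w k := by
            rw [wval, inf_range_succ']; rfl
          rw [this, hw.1]

lemma exists_repeat (w : ℕ → Fin n) : ∃ s t : ℕ, s < t ∧ t ≤ n ∧ w s = w t := by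
  have hninj : ¬ Function.Injective (fun r : Fin (n+1) => w r.val) := by
    intro hinj
    have := Fintype.card_le_of_injective _ hinj
    simp [Fintype.card_fin] at this
  rw [Function.not_injective_iff] at hninj
  obtain ⟨a, b, hab, hne⟩ := hninj
  rcases lt_or_gt_of_ne hne with h | h
  · exact ⟨a.val, b.val, h, Nat.lt_succ_iff.mp b.isLt, hab⟩
  · exact ⟨b.val, a.val, h, Nat.lt_succ_iff.mp a.isLt, hab.symm⟩

lemma wval_le_wval (A : Matrix (Fin n) (Fin n) B) (w w' : ℕ → Fin n) (k m : ℕ)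
    (h : ∀ r < m, ∃ q < k, w' r = w q ∧ w' (r+1) = w (q+1)) :
    wval A w k ≤ wval A w' m := by
  refine Finset.le_inf fun r hr => ?_
  rw [Finset.mem_range] at hr
  obtain ⟨q, hq, h1, h2⟩ := h r hr
  rw [h1, h2]
  exact Finset.inf_le (Finset.mem_range.mpr hq)

/-- Cycle removal: `A^n ≤ A^*`. -/
lemma pow_n_le_star (A : Matrix (Fin n) (Fin n) B) (i j : Fin n) :
    mmPow A n i j ≤ mmStar A i j := by
  refine (pow_le A n i j).trans ?_
  refine iSup_le fun w => iSup_le fun hw => ?_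
  obtain ⟨s, t, hst, htn, hws⟩ := exists_repeat w
  set L := t - s with hL
  set m := n - L with hm
  set w' : ℕ → Fin n := fun r => if r < s then w r else w (r + L) with hw'
  have hLpos : 0 < L := by omega
  have hLn : L ≤ n := by omega
  have e1 : w' 0 = i := by
    by_cases h : 0 < s
    · simp only [hw', if_pos h]; exact hw.1
    · have hs0 : s = 0 := by omega
      simp only [hw', if_neg (by omega : ¬ (0:ℕ) < s)]
      have : 0 + L = t := by omega
      rw [this, ← hws, hs0]; exact hw.1
  have e2 : w' m = j := by
    have : ¬ m < s := by omega
    simp only [hw', if_neg this]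
    have : m + L = n := by omega
    rw [this]; exact hw.2
  have cov : ∀ r < m, ∃ q < n, w' r = w q ∧ w' (r+1) = w (q+1) := by
    intro r hr
    by_cases hrs : r < s
    · refine ⟨r, by omega, by simp only [hw', if_pos hrs], ?_⟩
      by_cases hr1 : r + 1 < s
      · simp only [hw', if_pos hr1]
      · have hr1s : r + 1 = s := by omega
        simp only [hw', if_neg hr1]
        have : r + 1 + L = t := by omega
        rw [this, ← hws, hr1s]
    · refine ⟨r + L, by omega, by simp only [hw', if_neg hrs], ?_⟩
      have : ¬ r + 1 < s := by omega
      simp only [hw', if_neg this]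
      congr 1
      omega
  calc wval A w n ≤ wval A w' m := wval_le_wval A w w' n m cov
    _ ≤ mmPow A m (w' 0) (w' m) := wval_le_pow A m w'
    _ = mmPow A m i j := by rw [e1, e2]
    _ ≤ mmStar A i j := by
        have hmn : m < n := by omega
        simp only [mmStar, Fintype.card_fin]
        exact le_iSup₂_of_le m (Finset.mem_range.mpr hmn) le_rfl

/-- Pumping: given antitonicity of `k ↦ Aᵏ ⊗ x`, the sequence is constant from `n` on. -/
lemma pump (A : Matrix (Fin n) (Fin n) B) (x : Fin n → B)
    (hanti : ∀ k l : ℕ, k ≤ l → ∀ j, mmVec (mmPow A l) x j ≤ mmVec (mmPow A k) x j)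
    (i : Fin n) :
    mmVec (mmPow A n) x i ≤ mmVec (mmPow A (n+1)) x i := by
  show (⨆ j, mmPow A n i j ⊓ x j) ≤ _
  refine iSup_le fun j => ?_
  calc mmPow A n i j ⊓ x j
      ≤ (⨆ (w : ℕ → Fin n), ⨆ (_ : w 0 = i ∧ w n = j), wval A w n) ⊓ x j :=
        inf_le_inf_right _ (pow_le A n i j)
    _ = ⨆ (w : ℕ → Fin n), ⨆ (_ : w 0 = i ∧ w n = j), wval A w n ⊓ x j := by
        simp only [iSup_inf_eq]
    _ ≤ _ := by
        refine iSup_le fun w => iSup_le fun hw => ?_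
        obtain ⟨s, t, hst, htn, hws⟩ := exists_repeat w
        set L := t - s with hL
        set w'' : ℕ → Fin n := fun r => if r < t then w r else w (r - L) with hw''
        have hLpos : 0 < L := by omega
        have e1 : w'' 0 = i := by
          simp only [hw'', if_pos (by omega : (0:ℕ) < t)]; exact hw.1
        have e2 : w'' (n + L) = w n := by
          simp only [hw'', if_neg (by omega : ¬ n + L < t)]
          congr 1; omega
        have cov : ∀ r < n + L, ∃ q < n, w'' r = w q ∧ w'' (r+1) = w (q+1) := by
          intro r hr
          by_cases h1 : r + 1 < t
          · exact ⟨r, by omega, by simp only [hw'', if_pos (by omega : r < t)],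
              by simp only [hw'', if_pos h1]⟩
          · by_cases h2 : r + 1 = t
            · refine ⟨r, by omega, by simp only [hw'', if_pos (by omega : r < t)], ?_⟩
              simp only [hw'', if_neg h1]
              have : r + 1 - L = s := by omega
              rw [this, hws, ← h2]
            · refine ⟨r - L, by omega, by simp only [hw'', if_neg (by omega : ¬ r < t)], ?_⟩
              simp only [hw'', if_neg (by omega : ¬ r + 1 < t)]
              congr 1; omega
        calc wval A w n ⊓ x j
            ≤ wval A w'' (n + L) ⊓ x j :=
              inf_le_inf_right _ (wval_le_wval A w w'' n (n + L) cov)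
          _ = wval A w'' (n + L) ⊓ x (w'' (n + L)) := by rw [e2, hw.2]
          _ ≤ mmPow A (n + L) (w'' 0) (w'' (n + L)) ⊓ x (w'' (n + L)) :=
              inf_le_inf_right _ (wval_le_pow A (n + L) w'')
          _ ≤ mmVec (mmPow A (n + L)) x (w'' 0) := le_iSup_of_le (w'' (n + L)) le_rfl
          _ = mmVec (mmPow A (n + L)) x i := by rw [e1]
          _ ≤ mmVec (mmPow A (n+1)) x i := hanti (n+1) (n+L) (by omega) i

end Aux

namespace Aux2
open Aux

variable {n : ℕ}

lemma pow_zero_vec (A : Matrix (Fin n) (Fin n) B) (x : Fin n → B) :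
    mmVec (mmPow A 0) x = x := id_vec x

lemma anti_step (A : Matrix (Fin n) (Fin n) B) (x : Fin n → B)
    (hx : ∀ j, mmVec A x j ≤ x j) :
    ∀ (k : ℕ) (j : Fin n), mmVec (mmPow A (k+1)) x j ≤ mmVec (mmPow A k) x j := by
  intro k
  induction k with
  | zero =>
    intro j
    rw [succ_vec, pow_zero_vec]
    exact hx j
  | succ k ih =>
    intro j
    rw [succ_vec A (k+1)]
    conv_rhs => rw [succ_vec A k]
    exact vec_mono A ih j

lemma anti_ge (A : Matrix (Fin n) (Fin n) B) (x : Fin n → B)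
    (hx : ∀ j, mmVec A x j ≤ x j) :
    ∀ k l : ℕ, k ≤ l → ∀ j, mmVec (mmPow A l) x j ≤ mmVec (mmPow A k) x j := by
  intro k l hkl
  induction l, hkl using Nat.le_induction with
  | base => exact fun j => le_rfl
  | succ l hkl ih => exact fun j => (anti_step A x hx l j).trans (ih j)

end Aux2

open Aux Aux2 in
/-- The Bellman equation `x = A ⊗ x ⊕ b` always has a solution, and its
solution set is `{ A* ⊗ b ⊕ v : A ⊗ v = v }`. -/
theorem stmt4 {n : ℕ} (A : Matrix (Fin n) (Fin n) B) (b : Fin n → B) :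
    (∃ x : Fin n → B, x = fun i => mmVec A x i ⊔ b i) ∧
    (∀ x : Fin n → B,
      (x = fun i => mmVec A x i ⊔ b i) ↔
        ∃ v : Fin n → B, mmVec A v = v ∧ x = fun i => mmVec (mmStar A) b i ⊔ v i) := by
  have key : ∀ x : Fin n → B,
      (x = fun i => mmVec A x i ⊔ b i) ↔
        ∃ v : Fin n → B, mmVec A v = v ∧ x = fun i => mmVec (mmStar A) b i ⊔ v i := by
    intro x
    constructor
    · -- forward: every solution has the required form
      intro hx
      have hx' : ∀ i, mmVec A x i ≤ x i := by
        intro i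
        have h2 : x i = mmVec A x i ⊔ b i := congrFun hx i
        calc mmVec A x i ≤ mmVec A x i ⊔ b i := le_sup_left
          _ = x i := h2.symm
      have hanti := anti_ge A x hx'
      have hv : mmVec A (mmVec (mmPow A n) x) = mmVec (mmPow A n) x := by
        have heq : mmVec (mmPow A (n+1)) x = mmVec (mmPow A n) x :=
          funext fun j => le_antisymm (anti_step A x hx' n j) (pump A x hanti j)
        calc mmVec A (mmVec (mmPow A n) x) = mmVec (mmPow A (n+1)) x :=
              (succ_vec A n x).symm
          _ = mmVec (mmPow A n) x := heq
      have claim : ∀ (k : ℕ) (i : Fin n),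
          x i = mmVec (mmPow A k) x i ⊔ ⨆ j ∈ Finset.range k, mmVec (mmPow A j) b i := by
        intro k
        induction k with
        | zero =>
          intro i
          rw [pow_zero_vec]
          simp
        | succ k ih =>
          intro i
          have step1 : mmVec (mmPow A k) x i
              = mmVec (mmPow A (k+1)) x i ⊔ mmVec (mmPow A k) b i := by
            conv_lhs => rw [hx]
            rw [vec_sup, ← shift_vec]
          have step2 : (⨆ j ∈ Finset.range (k+1), mmVec (mmPow A j) b i)
              = mmVec (mmPow A k) b i ⊔ ⨆ j ∈ Finset.range k, mmVec (mmPow A j) b i := by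
            rw [Finset.range_add_one, Finset.iSup_insert]
          rw [step2, ih i, step1, sup_assoc]
      refine ⟨mmVec (mmPow A n) x, hv, ?_⟩
      funext i
      show x i = mmVec (mmStar A) b i ⊔ mmVec (mmPow A n) x i
      rw [star_vec, claim n i, sup_comm]
    · -- backward: every vector of the required form is a solution
      rintro ⟨v, hv, rfl⟩
      funext i
      show mmVec (mmStar A) b i ⊔ v i
          = mmVec A (fun i' => mmVec (mmStar A) b i' ⊔ v i') i ⊔ b i
      have hn : 0 < n := i.pos
      rw [vec_sup, congrFun hv i]
      have hstar : mmVec (mmStar A) b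
          = fun j => ⨆ k ∈ Finset.range n, mmVec (mmPow A k) b j :=
        funext (star_vec A b)
      have hA : mmVec A (mmVec (mmStar A) b) i
          = ⨆ k ∈ Finset.range n, mmVec (mmPow A (k+1)) b i := by
        rw [hstar, vec_biSup]
        exact iSup_congr fun k => iSup_congr fun _ => (congrFun (succ_vec A k b) i).symm
      have TA : mmVec (mmPow A n) b i ≤ ⨆ k ∈ Finset.range n, mmVec (mmPow A k) b i := by
        rw [← star_vec]
        exact iSup_mono fun j => inf_le_inf_right _ (pow_n_le_star A i j)
      have T0 : mmVec (mmPow A 0) b i = b i := congrFun (pow_zero_vec A b) i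
      have keyeq : (⨆ k ∈ Finset.range n, mmVec (mmPow A k) b i)
          = (⨆ k ∈ Finset.range n, mmVec (mmPow A (k+1)) b i) ⊔ b i := by
        apply le_antisymm
        · refine iSup₂_le fun k hk => ?_
          match k with
          | 0 => rw [T0]; exact le_sup_right
          | m+1 =>
            refine le_trans ?_ le_sup_left
            exact le_iSup₂_of_le m (Finset.mem_range.mpr (by
              have := Finset.mem_range.mp hk; omega)) le_rfl
        · refine sup_le (iSup₂_le fun k hk => ?_) ?_
          · by_cases h : k + 1 < n
            · exact le_iSup₂_of_le (k+1) (Finset.mem_range.mpr h) le_rfl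
            · have hkn : k + 1 = n := by
                have := Finset.mem_range.mp hk; omega
              rw [hkn]
              exact TA
          · rw [← T0]
            exact le_iSup₂_of_le 0 (Finset.mem_range.mpr hn) le_rfl
      rw [hA, star_vec, keyeq, sup_right_comm]
  refine ⟨?_, key⟩
  have hv0 : mmVec A (fun _ => (0:B)) = fun _ => (0:B) := by
    funext i
    simp [mmVec, B_zero_eq_bot]
  exact ⟨_, (key _).mpr ⟨fun _ => 0, hv0, rfl⟩⟩
end
end

section
/- Let A ∈ B^{m×n}, b ∈ B^m and λ ∈ B over the max-min algebra, with a_{ij} ≤ λ and b_i ≤ λ for all i, j. Then z ∈ B^n solves A ⊗ z ⊕ b = λ·1 if and only if there exists W ⊆ {1,...,n} such that C^W = {C_j : j ∈ W} is a minimal covering of I_0 and z ≥ z^W entrywise. -/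
noncomputable section

/-- For `A ∈ B^{m×n}`, `b ∈ B^m`, `λ ∈ B` with all entries of `A` and `b`
at most `λ`: a vector `z` solves `A ⊗ z ⊕ b = λ·1` iff `z ≥ z^W` for some `W` such that
`C^W = {C_j : j ∈ W}` is a minimal covering of `I₀ = {i : b_i < λ}`,
where `C_j = {i ∈ I₀ : a_{ij} = λ}`. -/
theorem stmt5 {m n : ℕ} (A : Matrix (Fin m) (Fin n) B) (b : Fin m → B) (lam : B)
    (hA : ∀ i j, A i j ≤ lam) (hb : ∀ i, b i ≤ lam) (z : Fin n → B) :
    (∀ i, mmVec A z i ⊔ b i = lam) ↔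
      ∃ W : Finset (Fin n),
        ({i | b i < lam} = ⋃ j ∈ W, {i | b i < lam ∧ A i j = lam}) ∧
        (∀ V ⊆ W, V ≠ W →
          {i | b i < lam} ≠ ⋃ j ∈ V, {i | b i < lam ∧ A i j = lam}) ∧
        (∀ j, (if j ∈ W then lam else 0) ≤ z j) := by
  classical
  have hcov_iff : ∀ W : Finset (Fin n),
      ({i | b i < lam} = ⋃ j ∈ W, {i | b i < lam ∧ A i j = lam}) ↔
      (∀ i, b i < lam → ∃ j ∈ W, A i j = lam) := by
    intro W
    constructor
    · intro hW i hi
      have : i ∈ ⋃ j ∈ W, {i | b i < lam ∧ A i j = lam} := hW ▸ hi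
      simp only [Set.mem_iUnion, Set.mem_setOf_eq] at this
      obtain ⟨j, hjW, _, hAij⟩ := this
      exact ⟨j, hjW, hAij⟩
    · intro hc
      apply Set.Subset.antisymm
      · intro i hi
        obtain ⟨j, hjW, hAij⟩ := hc i hi
        simp only [Set.mem_iUnion, Set.mem_setOf_eq]
        exact ⟨j, hjW, hi, hAij⟩
      · intro i hi
        simp only [Set.mem_iUnion, Set.mem_setOf_eq] at hi
        obtain ⟨j, _, hi, _⟩ := hi
        exact hi
  constructor
  · intro h
    -- key: each i with b i < lam is covered by some j with lam ≤ z j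
    have key : ∀ i, b i < lam → ∃ j, A i j = lam ∧ lam ≤ z j := by
      intro i hi
      have hbot : (⊥ : B) < lam := lt_of_le_of_lt bot_le hi
      have hsum := h i
      have hsup : mmVec A z i = lam := by
        rcases le_total (mmVec A z i) (b i) with hc | hc
        · rw [sup_eq_right.2 hc] at hsum; exact absurd hsum (ne_of_lt hi)
        · rw [sup_eq_left.2 hc] at hsum; exact hsum
      by_contra hcon
      push_neg at hcon
      have hlt : ∀ j, A i j ⊓ z j < lam := by
        intro j
        rcases lt_or_eq_of_le (hA i j) with hlt | heq
        · exact lt_of_le_of_lt inf_le_left hlt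
        · exact lt_of_le_of_lt inf_le_right (hcon j heq)
      have : mmVec A z i < lam := by
        rw [mmVec, ← Finset.sup_univ_eq_iSup]
        exact (Finset.sup_lt_iff hbot).2 (fun j _ => hlt j)
      exact absurd hsup (ne_of_lt this)
    set W0 : Finset (Fin n) := Finset.univ.filter (fun j => lam ≤ z j) with hW0
    set S : Finset (Finset (Fin n)) :=
      W0.powerset.filter (fun W => ∀ i, b i < lam → ∃ j ∈ W, A i j = lam) with hS
    have hW0S : W0 ∈ S := by
      rw [hS, Finset.mem_filter]
      refine ⟨Finset.mem_powerset_self _, fun i hi => ?_⟩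
      obtain ⟨j, hj1, hj2⟩ := key i hi
      exact ⟨j, by simp [hW0, hj2], hj1⟩
    obtain ⟨W, hWS, hWmin⟩ := S.exists_min_image Finset.card ⟨W0, hW0S⟩
    rw [hS, Finset.mem_filter, Finset.mem_powerset] at hWS
    obtain ⟨hWsub, hWcov⟩ := hWS
    refine ⟨W, (hcov_iff W).2 hWcov, ?_, ?_⟩
    · intro V hVW hVne hVcov
      have hVcov' := (hcov_iff V).1 hVcov
      have hVS : V ∈ S := by
        rw [hS, Finset.mem_filter, Finset.mem_powerset]
        exact ⟨hVW.trans hWsub, hVcov'⟩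
      have hcard := hWmin V hVS
      have : V.card < W.card := Finset.card_lt_card (lt_of_le_of_ne hVW hVne)
      omega
    · intro j
      by_cases hj : j ∈ W
      · simp only [hj, if_true]
        have : j ∈ W0 := hWsub hj
        rw [hW0, Finset.mem_filter] at this
        exact this.2
      · simp only [hj, if_false]
        exact unitInterval.nonneg' 
  · rintro ⟨W, hcov, -, hz⟩ i
    apply le_antisymm
    · exact sup_le (iSup_le fun j => le_trans inf_le_left (hA i j)) (hb i)
    · by_cases hi : b i < lam
      · obtain ⟨j, hjW, hAij⟩ := (hcov_iff W).1 hcov i hi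
        have hzj : lam ≤ z j := by have := hz j; rwa [if_pos hjW] at this
        calc lam ≤ A i j ⊓ z j := le_inf hAij.ge hzj
          _ ≤ mmVec A z i := le_iSup (fun j => A i j ⊓ z j) j
          _ ≤ _ := le_sup_left
      · exact le_trans (le_of_not_gt hi) le_sup_right
end
end

section
/- Let A ∈ B^{m×n}, b ∈ B^m and λ ∈ B over the max-min algebra, with a_{ij} ≤ λ and b_i ≤ λ for all i, j. The equation A ⊗ z ⊕ b = λ·1 is solvable if and only if there exists W ⊆ {1,...,n} with I_0 = ∪_{j∈W} C_j (a covering of I_0). In that case the solution set equals ∪_W { z ∈ B^n : z^W ≤ z ≤ 1 }, where the union is over all W ⊆ {1,...,n} such that C^W is a minimal covering of I_0. -/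
noncomputable section

lemma solve_iff' {m n : ℕ} (A : Matrix (Fin m) (Fin n) B) (b : Fin m → B) (lam : B)
    (hA : ∀ i j, A i j ≤ lam) (hb : ∀ i, b i ≤ lam) (z : Fin n → B) :
    (∀ i, mmVec A z i ⊔ b i = lam) ↔ ∀ i, b i < lam → ∃ j, A i j = lam ∧ lam ≤ z j := by
  have hsup : ∀ i, mmVec A z i ≤ lam := by
    intro i
    exact iSup_le fun j => le_trans inf_le_left (hA i j)
  constructor
  · intro h i hi
    have h1 : lam ≤ mmVec A z i ⊔ b i := (h i).ge
    have h2 : lam ≤ mmVec A z i := by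
      rcases le_sup_iff.mp h1 with h | h
      · exact h
      · exact absurd h (not_le.mpr hi)
    rcases isEmpty_or_nonempty (Fin n) with he | hne
    · have : mmVec A z i = ⊥ := by
        simp [mmVec, iSup_of_empty]
      rw [this] at h2
      exact absurd (lt_of_lt_of_le hi (le_trans h2 bot_le)) (lt_irrefl _)
    · obtain ⟨j0, hj0⟩ := Finite.exists_max (fun j => A i j ⊓ z j)
      have : mmVec A z i ≤ A i j0 ⊓ z j0 := iSup_le hj0
      have hl : lam ≤ A i j0 ⊓ z j0 := le_trans h2 this
      exact ⟨j0, le_antisymm (hA i j0) (le_trans hl inf_le_left),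
        le_trans hl inf_le_right⟩
  · intro h i
    by_cases hi : b i < lam
    · obtain ⟨j, haj, hzj⟩ := h i hi
      have : lam ≤ mmVec A z i := by
        refine le_trans ?_ (le_iSup (fun j => A i j ⊓ z j) j)
        rw [haj]
        exact le_inf le_rfl hzj
      exact le_antisymm (sup_le (hsup i) (hb i)) (le_trans this le_sup_left)
    · have hbi : b i = lam := le_antisymm (hb i) (not_lt.mp hi)
      rw [hbi]
      exact sup_eq_right.mpr (hsup i)

lemma cov_iff' {m n : ℕ} (A : Matrix (Fin m) (Fin n) B) (b : Fin m → B) (lam : B)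
    (W : Finset (Fin n)) :
    ({i | b i < lam} = ⋃ j ∈ W, {i | b i < lam ∧ A i j = lam}) ↔
      ∀ i, b i < lam → ∃ j ∈ W, A i j = lam := by
  constructor
  · intro h i hi
    have : i ∈ ⋃ j ∈ W, {i | b i < lam ∧ A i j = lam} := h ▸ hi
    simp only [Set.mem_iUnion, Set.mem_setOf_eq] at this
    obtain ⟨j, hjW, _, hja⟩ := this
    exact ⟨j, hjW, hja⟩
  · intro h
    ext i
    simp only [Set.mem_setOf_eq, Set.mem_iUnion]
    constructor
    · intro hi
      obtain ⟨j, hjW, hja⟩ := h i hi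
      exact ⟨j, hjW, hi, hja⟩
    · rintro ⟨j, _, hi, _⟩
      exact hi

/-- With all entries of `A` and `b` at most `λ`: the equation
`A ⊗ z ⊕ b = λ·1` is solvable iff there is a covering `C^W` of `I₀`; in that case the
solution set is the union of the boxes `{z : z^W ≤ z ≤ 1}` over all `W` such that `C^W`
is a minimal covering of `I₀`. -/
theorem stmt6 {m n : ℕ} (A : Matrix (Fin m) (Fin n) B) (b : Fin m → B) (lam : B)
    (hA : ∀ i j, A i j ≤ lam) (hb : ∀ i, b i ≤ lam) :
    ((∃ z : Fin n → B, ∀ i, mmVec A z i ⊔ b i = lam) ↔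
      ∃ W : Finset (Fin n),
        {i | b i < lam} = ⋃ j ∈ W, {i | b i < lam ∧ A i j = lam}) ∧
    ((∃ W : Finset (Fin n),
        {i | b i < lam} = ⋃ j ∈ W, {i | b i < lam ∧ A i j = lam}) →
      ∀ z : Fin n → B,
        (∀ i, mmVec A z i ⊔ b i = lam) ↔
          ∃ W : Finset (Fin n),
            ({i | b i < lam} = ⋃ j ∈ W, {i | b i < lam ∧ A i j = lam}) ∧
            (∀ V ⊆ W, V ≠ W →
              {i | b i < lam} ≠ ⋃ j ∈ V, {i | b i < lam ∧ A i j = lam}) ∧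
            (∀ j, (if j ∈ W then lam else 0) ≤ z j ∧ z j ≤ 1)) := by
  classical
  constructor
  · constructor
    · rintro ⟨z, hz⟩
      refine ⟨Finset.univ.filter (fun j => lam ≤ z j), (cov_iff' A b lam _).mpr ?_⟩
      intro i hi
      obtain ⟨j, hja, hjz⟩ := (solve_iff' A b lam hA hb z).mp hz i hi
      exact ⟨j, Finset.mem_filter.mpr ⟨Finset.mem_univ j, hjz⟩, hja⟩
    · rintro ⟨W, hW⟩
      refine ⟨fun j => if j ∈ W then lam else 0, (solve_iff' A b lam hA hb _).mpr ?_⟩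
      intro i hi
      obtain ⟨j, hjW, hja⟩ := (cov_iff' A b lam W).mp hW i hi
      exact ⟨j, hja, by simp [hjW]⟩
  · intro _ z
    constructor
    · intro hz
      set W₀ : Finset (Fin n) := Finset.univ.filter (fun j => lam ≤ z j) with hW₀
      have hcov₀ : ∀ i, b i < lam → ∃ j ∈ W₀, A i j = lam := by
        intro i hi
        obtain ⟨j, hja, hjz⟩ := (solve_iff' A b lam hA hb z).mp hz i hi
        exact ⟨j, Finset.mem_filter.mpr ⟨Finset.mem_univ j, hjz⟩, hja⟩
      set S : Finset (Finset (Fin n)) :=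
        W₀.powerset.filter (fun V => ∀ i, b i < lam → ∃ j ∈ V, A i j = lam) with hS
      have hSne : S.Nonempty :=
        ⟨W₀, Finset.mem_filter.mpr ⟨Finset.mem_powerset.mpr le_rfl, hcov₀⟩⟩
      obtain ⟨W, hWS, hWmin⟩ := S.exists_min_image Finset.card hSne
      have hWsub : W ⊆ W₀ := Finset.mem_powerset.mp (Finset.mem_filter.mp hWS).1
      have hWcov : ∀ i, b i < lam → ∃ j ∈ W, A i j = lam :=
        (Finset.mem_filter.mp hWS).2
      refine ⟨W, (cov_iff' A b lam W).mpr hWcov, ?_, ?_⟩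
      · intro V hVW hVne hVcov
        have hVcov' : ∀ i, b i < lam → ∃ j ∈ V, A i j = lam :=
          (cov_iff' A b lam V).mp hVcov
        have hVS : V ∈ S := Finset.mem_filter.mpr
          ⟨Finset.mem_powerset.mpr (hVW.trans hWsub), hVcov'⟩
        have hcard : W.card ≤ V.card := hWmin V hVS
        have : V.card < W.card := Finset.card_lt_card (lt_of_le_of_ne hVW hVne)
        omega
      · intro j
        refine ⟨?_, (z j).2.2⟩
        by_cases hjW : j ∈ W
        · simp only [hjW, if_true]
          exact (Finset.mem_filter.mp (hWsub hjW)).2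
        · simp only [hjW, if_false]
          exact (z j).2.1
    · rintro ⟨W, hWcov, _, hzW⟩
      refine (solve_iff' A b lam hA hb z).mpr ?_
      intro i hi
      obtain ⟨j, hjW, hja⟩ := (cov_iff' A b lam W).mp hWcov i hi
      refine ⟨j, hja, ?_⟩
      have := (hzW j).1
      rwa [if_pos hjW] at this
end
end

section
/- Let λ ∈ B and W ⊆ N = {1,...,n}, and let S^W = { z ∈ B^n : λ ≤ z_k ≤ 1 for k ∈ W, z_k ≥ 0 for k ∈ N \ W }. Then S^W = { z^W ⊕ Λ^W ⊗ v : v ∈ B^n }, where z^W ∈ B^n has z^W_j = λ for j ∈ W and 0 otherwise, and Λ^W ∈ B^{n×n} has (Λ^W)_{ij} = 1 if i = j and (Λ^W)_{ij} = z^W_i if i ≠ j. -/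
noncomputable section

lemma B_le_one (x : B) : x ≤ 1 := Subtype.coe_le_coe.mp (by simpa using x.2.2)
lemma B_nonneg (x : B) : (0:B) ≤ x := Subtype.coe_le_coe.mp (by simpa using x.2.1)

/-- The box `S^W = {z : λ ≤ z_k ≤ 1 for k ∈ W, z_k ≥ 0 for k ∉ W}` equals
`{ z^W ⊕ Λ^W ⊗ v : v ∈ Bⁿ }`, where `z^W_j = λ` for `j ∈ W` and `0` otherwise, and
`(Λ^W)_{ij} = 1` if `i = j`, `(Λ^W)_{ij} = z^W_i` otherwise. -/
theorem stmt7 {n : ℕ} (lam : B) (W : Finset (Fin n)) (z : Fin n → B) :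
    ((∀ k ∈ W, lam ≤ z k ∧ z k ≤ 1) ∧ ∀ k ∉ W, 0 ≤ z k) ↔
      ∃ v : Fin n → B,
        z = fun i => (if i ∈ W then lam else 0) ⊔
          mmVec (fun i j : Fin n =>
            if i = j then 1 else if i ∈ W then lam else 0) v i := by
  constructor
  · rintro ⟨h1, _⟩
    refine ⟨z, funext fun i => le_antisymm ?_ ?_⟩
    · refine le_sup_of_le_right (le_trans ?_ (le_iSup _ i))
      simp only [if_pos rfl]
      exact le_inf (B_le_one _) le_rfl
    · apply sup_le
      · split
        · exact (h1 i ‹_›).1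
        · exact B_nonneg _
      · apply iSup_le; intro j
        by_cases hij : i = j
        · subst hij; simp
        · simp only [if_neg hij]
          split
          · exact inf_le_left.trans (h1 i ‹_›).1
          · exact inf_le_left.trans (B_nonneg _)
  · rintro ⟨v, rfl⟩
    exact ⟨fun k hk => ⟨by simp [hk], B_le_one _⟩,
      fun k _ => B_nonneg _⟩
end
end

section
/- Let A ∈ B^{n×n} and λ ∈ B over the max-min algebra. The set of background λ-eigenvectors of A (vectors x ∈ B^n with A ⊗ x = λ ⊗ x and x_i ≥ λ for all i) is nonempty if and only if max_{1≤j≤n} a_{ij} ≥ λ for every i ∈ {1,...,n}. -/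
noncomputable section

/-- The set of background `λ`-eigenvectors of `A` (vectors `x` with
`A ⊗ x = λ ⊗ x` and `x_i ≥ λ` for all `i`) is nonempty iff `max_j a_{ij} ≥ λ` for every `i`. -/
theorem stmt8 {n : ℕ} (A : Matrix (Fin n) (Fin n) B) (lam : B) :
    (∃ x : Fin n → B, mmVec A x = (fun i => lam ⊓ x i) ∧ ∀ i, lam ≤ x i) ↔
      ∀ i, lam ≤ ⨆ j, A i j := by
  constructor
  · rintro ⟨x, hx, hge⟩ i
    have h1 : mmVec A x i = lam := by
      rw [congrFun hx i, inf_eq_left.mpr (hge i)]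
    calc lam = ⨆ j, A i j ⊓ x j := h1.symm
      _ ≤ ⨆ j, A i j := iSup_mono fun j => inf_le_left
  · intro h
    refine ⟨fun _ => lam, ?_, fun i => le_refl _⟩
    funext i
    show (⨆ j, A i j ⊓ lam) = lam ⊓ lam
    rw [← iSup_inf_eq, inf_eq_right.mpr (h i), inf_idem]
end
end

section
/- Let A ∈ B^{n×n} and λ ∈ B over the max-min algebra, and suppose max_{1≤j≤n} a_{ij} ≥ λ for every i. Then the set of background λ-eigenvectors of A equals { x ∈ B^n : x_k = λ for k ∈ N^{>λ}, and λ ≤ x_k ≤ 1 for k ∈ N^{≤λ} }, where N^{>λ} = { k : max_{1≤i≤n} a_{ik} > λ } and N^{≤λ} = { k : max_{1≤i≤n} a_{ik} ≤ λ }. -/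
noncomputable section

/-- If `max_j a_{ij} ≥ λ` for every `i`, then the set of background
`λ`-eigenvectors of `A` equals
`{x : x_k = λ for k ∈ N^{>λ}, λ ≤ x_k ≤ 1 for k ∈ N^{≤λ}}`, where
`N^{>λ} = {k : max_i a_{ik} > λ}` and `N^{≤λ} = {k : max_i a_{ik} ≤ λ}`. -/
theorem stmt9 {n : ℕ} (A : Matrix (Fin n) (Fin n) B) (lam : B)
    (h : ∀ i, lam ≤ ⨆ j, A i j) (x : Fin n → B) :
    (mmVec A x = (fun i => lam ⊓ x i) ∧ ∀ i, lam ≤ x i) ↔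
      ((∀ k, lam < (⨆ i, A i k) → x k = lam) ∧
       (∀ k, (⨆ i, A i k) ≤ lam → lam ≤ x k ∧ x k ≤ 1)) := by
  constructor
  · rintro ⟨heq, hle⟩
    have heig : ∀ i, mmVec A x i = lam := by
      intro i
      have := congrFun heq i
      rw [this, inf_eq_left.mpr (hle i)]
    constructor
    · intro k hk
      by_contra hne
      have hlt : lam < x k := lt_of_le_of_ne (hle k) (Ne.symm hne)
      obtain ⟨i, hi⟩ := lt_iSup_iff.mp hk
      have : lam < A i k ⊓ x k := lt_inf_iff.mpr ⟨hi, hlt⟩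
      have h2 : A i k ⊓ x k ≤ mmVec A x i := le_iSup (fun j => A i j ⊓ x j) k
      rw [heig i] at h2
      exact absurd (this.trans_le h2) (lt_irrefl _)
    · intro k _
      exact ⟨hle k, le_top⟩
  · rintro ⟨h1, h2⟩
    have hle : ∀ i, lam ≤ x i := by
      intro i
      rcases le_or_gt (⨆ j, A j i) lam with hc | hc
      · exact (h2 i hc).1
      · exact (h1 i hc).ge
    refine ⟨funext fun i => ?_, hle⟩
    rw [inf_eq_left.mpr (hle i)]
    apply le_antisymm
    · apply iSup_le
      intro j
      rcases le_or_gt (⨆ i', A i' j) lam with hc | hc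
      · exact inf_le_of_left_le ((le_iSup (fun i' => A i' j) i).trans hc)
      · rw [h1 j hc]; exact inf_le_right
    · calc lam = (⨆ j, A i j) ⊓ lam := (inf_eq_right.mpr (h i)).symm
        _ = ⨆ j, A i j ⊓ lam := iSup_inf_eq _ _
        _ ≤ ⨆ j, A i j ⊓ x j := iSup_mono fun j => inf_le_inf_left _ (hle j)
end
end

section
/- Let λ ∈ B and let N_1, N_2 partition N = {1,...,n} (N_1 ∪ N_2 = N, N_1 ∩ N_2 = ∅). Let S = { x ∈ B^n : x_k = λ for k ∈ N_1, λ ≤ x_k ≤ 1 for k ∈ N_2 }. Then S = { λ·1 ⊕ Λ_{N,N_2} ⊗ z : z ∈ B^{|N_2|} }, where Λ ∈ B^{n×n} has Λ_{ii} = 1 and Λ_{ij} = λ for i ≠ j, and Λ_{N,N_2} is its submatrix consisting of the columns indexed by N_2. -/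
noncomputable section

lemma le_of_subtype_coe (y : B) : y ≤ 1 := by
  change (y : ℝ) ≤ ((1:B) : ℝ)
  exact y.2.2

/-- For a partition `N₁ ∪ N₂ = N`, the set
`S = {x : x_k = λ for k ∈ N₁, λ ≤ x_k ≤ 1 for k ∈ N₂}` equals
`{ λ·1 ⊕ Λ_{N,N₂} ⊗ z : z ∈ B^{|N₂|} }`, where `Λ_{ii} = 1` and `Λ_{ij} = λ` for `i ≠ j`. -/
theorem stmt10 {n : ℕ} (lam : B) (N1 N2 : Finset (Fin n))
    (hU : N1 ∪ N2 = Finset.univ) (hD : Disjoint N1 N2) (x : Fin n → B) :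
    ((∀ k ∈ N1, x k = lam) ∧ ∀ k ∈ N2, lam ≤ x k ∧ x k ≤ 1) ↔
      ∃ z : ↥N2 → B,
        x = fun i => lam ⊔
          mmVec (fun (i : Fin n) (j : ↥N2) => if i = (j : Fin n) then 1 else lam) z i := by

  have hle1 : ∀ y : B, y ≤ 1 := fun y => le_of_subtype_coe y
  constructor
  · rintro ⟨h1, h2⟩
    refine ⟨fun j => x j, ?_⟩
    funext i
    by_cases hi : i ∈ N1
    · rw [h1 i hi]
      refine le_antisymm le_sup_left (sup_le le_rfl ?_)
      simp only [mmVec]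
      refine iSup_le fun j => ?_
      have hij : i ≠ (j : Fin n) := by
        intro h
        exact Finset.disjoint_left.mp hD hi (h ▸ j.2)
      rw [if_neg hij]
      exact inf_le_left
    · have hi2 : i ∈ N2 := by
        have : i ∈ N1 ∪ N2 := hU ▸ Finset.mem_univ i
        rcases Finset.mem_union.mp this with h | h
        · exact absurd h hi
        · exact h
      simp only [mmVec]
      refine le_antisymm ?_ ?_
      · refine le_sup_of_le_right ?_
        have : (if i = ((⟨i, hi2⟩ : ↥N2) : Fin n) then (1:B) else lam) ⊓ x i = x i := by
          simp [inf_eq_right.mpr (hle1 (x i))]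
        calc x i = (if i = ((⟨i, hi2⟩ : ↥N2) : Fin n) then (1:B) else lam) ⊓ x ((⟨i, hi2⟩ : ↥N2) : Fin n) := this.symm
          _ ≤ _ := le_iSup (fun j : ↥N2 => (if i = (j : Fin n) then (1:B) else lam) ⊓ x (j : Fin n)) ⟨i, hi2⟩
      · refine sup_le (h2 i hi2).1 (iSup_le fun j => ?_)
        by_cases h : i = (j : Fin n)
        · rw [if_pos h, ← h]
          exact inf_le_right
        · rw [if_neg h]
          exact le_trans inf_le_left (h2 i hi2).1
  · rintro ⟨z, rfl⟩
    constructor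
    · intro k hk
      refine le_antisymm (sup_le le_rfl ?_) le_sup_left
      simp only [mmVec]
      refine iSup_le fun j => ?_
      have hkj : k ≠ (j : Fin n) := by
        intro h
        exact Finset.disjoint_left.mp hD hk (h ▸ j.2)
      rw [if_neg hkj]
      exact inf_le_left
    · intro k _
      exact ⟨le_sup_left, hle1 _⟩
end
end

section
/- Let A ∈ B^{n×n} and λ ∈ B over the max-min algebra. The set of pure λ-eigenvectors of A (vectors x with A ⊗ x = x and x_i ≤ λ for all i) equals the max-min column space { A^*_λ ⊗ y : y ∈ B^n }, where A^*_λ is the matrix whose i-th column is min(λ, (A^+)_{ii}, ·) applied entrywise to the i-th column of A^*, i.e. (A^*_λ)_{ki} = min(λ, (A^+)_{ii}, (A^*)_{ki}). In particular, each column of A^*_λ is a pure λ-eigenvector of A. -/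
noncomputable section

/-- The matrix `A*_λ`, whose `i`-th column has entries `min (λ, (A⁺)_{ii}, (A*)_{ki})`. -/
def mmStarLam {α : Type*} [Fintype α] [DecidableEq α] (A : Matrix α α B) (lam : B) :
    Matrix α α B :=
  fun k i => lam ⊓ mmPlus A i i ⊓ mmStar A k i

namespace Stmt11Aux

lemma zle (x : B) : 0 ≤ x := x.2.1
lemma lone (x : B) : x ≤ 1 := x.2.2

lemma mmVec_mmMul {α β γ : Type*} (A : Matrix α β B) (C : Matrix β γ B) (x : γ → B) :
    mmVec (mmMul A C) x = mmVec A (mmVec C x) := by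
  funext i
  simp only [mmVec, mmMul, iSup_inf_eq, inf_iSup_eq, inf_assoc]
  exact iSup_comm

lemma mmMul_assoc {α β γ δ : Type*} (A : Matrix α β B) (C : Matrix β γ B) (D : Matrix γ δ B) :
    mmMul (mmMul A C) D = mmMul A (mmMul C D) := by
  funext i k
  simp only [mmMul, iSup_inf_eq, inf_iSup_eq, inf_assoc]
  exact iSup_comm

lemma iSup_inf_ite {α : Type*} [DecidableEq α] (k : α) (g : α → B) :
    (⨆ j, g j ⊓ (if j = k then 1 else 0)) = g k := by
  refine le_antisymm (iSup_le fun j => ?_) ?_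
  · by_cases h : j = k
    · subst h; simp only [if_pos rfl]; exact inf_le_left.trans (le_of_eq rfl) |>.trans le_rfl
    · simp only [if_neg h]
      exact (inf_le_right).trans (zle _)
  · refine le_trans ?_ (le_iSup (fun j => g j ⊓ (if j = k then 1 else 0)) k)
    simp only [if_pos rfl]
    exact le_inf le_rfl (lone _)

lemma iSup_ite_inf {α : Type*} [DecidableEq α] (k : α) (g : α → B) :
    (⨆ j, (if k = j then (1:B) else 0) ⊓ g j) = g k := by
  have := iSup_inf_ite k g
  rw [← this]
  congr 1; funext j
  by_cases h : j = k
  · subst h; simp [inf_comm]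
  · simp [h, Ne.symm h]

lemma mmMul_mmId {α β : Type*} [DecidableEq β] (A : Matrix α β B) : mmMul A (mmId β) = A := by
  funext i k
  exact iSup_inf_ite k (fun j => A i j)

lemma mmId_mmMul {α β : Type*} [DecidableEq α] (A : Matrix α β B) : mmMul (mmId α) A = A := by
  funext i k
  exact iSup_ite_inf i (fun j => A j k)

lemma mmPow_succ' {α : Type*} [DecidableEq α] (A : Matrix α α B) (m : ℕ) :
    mmPow A (m + 1) = mmMul (mmPow A m) A := by
  induction m with
  | zero => show mmMul A (mmId α) = mmMul (mmId α) A; rw [mmMul_mmId, mmId_mmMul]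
  | succ m ih =>
    show mmMul A (mmPow A (m+1)) = mmMul (mmPow A (m+1)) A
    conv_lhs => rw [ih]
    rw [← mmMul_assoc]
    rfl

lemma mmVec_mmId {α : Type*} [DecidableEq α] (x : α → B) : mmVec (mmId α) x = x := by
  funext i
  exact iSup_ite_inf i x

variable {n : ℕ} (A : Matrix (Fin n) (Fin n) B)

/-- weight of the walk `f 0, f 1, ..., f m`. -/
def wgt (f : ℕ → Fin n) : ℕ → B
  | 0 => 1
  | m + 1 => A (f m) (f (m + 1)) ⊓ wgt f m

lemma wgt_le_edge (f : ℕ → Fin n) {t m : ℕ} (h : t < m) :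
    wgt A f m ≤ A (f t) (f (t + 1)) := by
  induction m with
  | zero => omega
  | succ m ih =>
    by_cases ht : t = m
    · subst ht; exact inf_le_left
    · exact inf_le_right.trans (ih (by omega))

lemma le_wgt (f : ℕ → Fin n) {c : B} {m : ℕ} (h : ∀ t < m, c ≤ A (f t) (f (t + 1))) :
    c ≤ wgt A f m := by
  induction m with
  | zero => exact lone c
  | succ m ih => exact le_inf (h m (by omega)) (ih fun t ht => h t (by omega))

lemma wgt_le_pow (f : ℕ → Fin n) (m : ℕ) : wgt A f m ≤ mmPow A m (f 0) (f m) := by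
  induction m with
  | zero =>
    show (1 : B) ≤ mmPow A 0 (f 0) (f 0)
    simp [mmPow, mmId]
  | succ m ih =>
    rw [mmPow_succ']
    refine le_trans ?_ (le_iSup (fun j => mmPow A m (f 0) j ⊓ A j (f (m+1))) (f m))
    exact le_inf (inf_le_right.trans ih) inf_le_left

/-- prepend a vertex to a walk. -/
def consP (i : Fin n) (f : ℕ → Fin n) : ℕ → Fin n
  | 0 => i
  | t + 1 => f t

lemma pow_le_iSup_wgt (m : ℕ) (i j : Fin n) :
    mmPow A m i j ≤ ⨆ (f : ℕ → Fin n) (_ : f 0 = i) (_ : f m = j), wgt A f m := by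
  induction m generalizing i j with
  | zero =>
    by_cases h : i = j
    · subst h
      have h1 : mmPow A 0 i i = 1 := by simp [mmPow, mmId]
      rw [h1]
      refine le_iSup_of_le (fun _ => i) ?_
      refine le_iSup_of_le rfl ?_
      exact le_iSup_of_le rfl le_rfl
    · have h1 : mmPow A 0 i j = 0 := by simp [mmPow, mmId, h]
      rw [h1]; exact zle _
  | succ m ih =>
    show (⨆ k, A i k ⊓ mmPow A m k j) ≤ _
    refine iSup_le fun k => ?_
    have h1 : A i k ⊓ mmPow A m k j ≤
        ⨆ (f : ℕ → Fin n) (_ : f 0 = k) (_ : f m = j), A i k ⊓ wgt A f m := by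
      refine le_trans (inf_le_inf_left _ (ih k j)) ?_
      rw [inf_iSup_eq]
      refine iSup_le fun f => ?_
      rw [inf_iSup_eq]
      refine iSup_le fun h0 => ?_
      rw [inf_iSup_eq]
      refine iSup_le fun hm => ?_
      exact le_iSup_of_le f (le_iSup_of_le h0 (le_iSup_of_le hm le_rfl))
    refine h1.trans ?_
    refine iSup_le fun f => iSup_le fun h0 => iSup_le fun hm => ?_
    refine le_iSup_of_le (consP i f) (le_iSup_of_le rfl (le_iSup_of_le hm ?_))
    refine le_wgt A (consP i f) fun t ht => ?_
    cases t with
    | zero =>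
      show _ ≤ A i (f 0)
      rw [h0]; exact inf_le_left
    | succ s =>
      show _ ≤ A (f s) (f (s + 1))
      exact inf_le_right.trans (wgt_le_edge A f (by omega))

lemma pow_le_star (m : ℕ) (i j : Fin n) : mmPow A m i j ≤ mmStar A i j := by
  induction m using Nat.strong_induction_on with
  | _ m IH =>
  rcases lt_or_ge m n with hm | hm
  · exact le_iSup_of_le m (le_iSup_of_le (by simp [Finset.mem_range, hm]) le_rfl)
  · refine (pow_le_iSup_wgt A m i j).trans ?_
    refine iSup_le fun f => iSup_le fun h0 => iSup_le fun hmj => ?_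
    obtain ⟨a', b', hab', hfab'⟩ :=
      Fintype.exists_ne_map_eq_of_card_lt (fun t : Fin (n + 1) => f t) (by simp)
    obtain ⟨a, b, hab, hbn, hfe⟩ : ∃ a b : ℕ, a < b ∧ b ≤ n ∧ f a = f b := by
      rcases hab'.lt_or_gt with h | h
      · exact ⟨a', b', h, Nat.lt_succ_iff.1 b'.isLt, hfab'⟩
      · exact ⟨b', a', h, Nat.lt_succ_iff.1 a'.isLt, hfab'.symm⟩
    set m' := m - (b - a) with hm'
    set g : ℕ → Fin n := fun t => if t < a then f t else f (t + (b - a)) with hg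
    have hm'lt : m' < m := by omega
    have hg0 : g 0 = i := by
      by_cases h : 0 < a
      · rw [hg]; simp only [if_pos h]; exact h0
      · have ha0 : a = 0 := by omega
        rw [hg]; simp only [Nat.lt_irrefl, if_neg (by omega : ¬ 0 < a)]
        rw [show 0 + (b - a) = b by omega, ← hfe, ha0, h0]
    have hgm : g m' = j := by
      rw [hg]; simp only [if_neg (by omega : ¬ m' < a)]
      rw [show m' + (b - a) = m by omega, hmj]
    have hwgt : wgt A f m ≤ wgt A g m' := by
      refine le_wgt A g fun t ht => ?_
      by_cases htA : t < a
      · have e1 : g t = f t := by rw [hg]; simp [htA]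
        have e2 : g (t + 1) = f (t + 1) := by
          by_cases h2 : t + 1 < a
          · rw [hg]; simp [h2]
          · have : t + 1 = a := by omega
            rw [hg]; simp only [if_neg h2]
            rw [show t + 1 + (b - a) = b by omega, ← hfe, this]
        rw [e1, e2]
        exact wgt_le_edge A f (by omega)
      · have e1 : g t = f (t + (b - a)) := by rw [hg]; simp [htA]
        have e2 : g (t + 1) = f (t + (b - a) + 1) := by
          rw [hg]; simp only [if_neg (by omega : ¬ t + 1 < a)]
          rw [show t + 1 + (b - a) = t + (b - a) + 1 by omega]
        rw [e1, e2]
        exact wgt_le_edge A f (by omega)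
    have : wgt A g m' ≤ mmStar A i j := by
      refine le_trans (wgt_le_pow A g m') ?_
      rw [hg0, hgm]
      exact IH m' hm'lt
    exact hwgt.trans this

lemma mul_star_eq_plus (k i : Fin n) :
    (⨆ j, A k j ⊓ mmStar A j i) = mmPlus A k i := by
  refine le_antisymm ?_ ?_
  · refine iSup_le fun j => ?_
    rw [mmStar, inf_iSup_eq]
    refine iSup_le fun m => ?_
    rw [inf_iSup_eq]
    refine iSup_le fun hm => ?_
    have h1 : A k j ⊓ mmPow A m j i ≤ mmPow A (m + 1) k i :=
      le_iSup (fun l => A k l ⊓ mmPow A m l i) j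
    refine h1.trans ?_
    refine le_iSup_of_le (m + 1) (le_iSup_of_le ?_ le_rfl)
    simp only [Finset.mem_Icc, Fintype.card_fin]
    simp only [Finset.mem_range, Fintype.card_fin] at hm
    omega
  · refine iSup_le fun m => iSup_le fun hm => ?_
    simp only [Finset.mem_Icc, Fintype.card_fin] at hm
    obtain ⟨s, rfl⟩ : ∃ s, m = s + 1 := ⟨m - 1, by omega⟩
    show (⨆ j, A k j ⊓ mmPow A s j i) ≤ _
    refine iSup_le fun j => ?_
    refine le_iSup_of_le j (inf_le_inf_left _ ?_)
    refine le_iSup_of_le s (le_iSup_of_le ?_ le_rfl)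
    simp only [Finset.mem_range, Fintype.card_fin]
    omega

lemma plus_le_star (k i : Fin n) : mmPlus A k i ≤ mmStar A k i :=
  iSup_le fun m => iSup_le fun _ => pow_le_star A m k i

lemma plus_inf_star (k i : Fin n) :
    mmPlus A i i ⊓ mmPlus A k i = mmPlus A i i ⊓ mmStar A k i := by
  refine le_antisymm (inf_le_inf_left _ (plus_le_star A k i)) (le_inf inf_le_left ?_)
  rw [mmStar, inf_iSup_eq]
  refine iSup_le fun m => ?_
  rw [inf_iSup_eq]
  refine iSup_le fun hm => ?_
  cases m with
  | zero =>
    show mmPlus A i i ⊓ mmId (Fin n) k i ≤ _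
    by_cases h : k = i
    · subst h; exact inf_le_left
    · refine inf_le_right.trans ?_
      simp only [mmId, if_neg h]
      exact zle _
  | succ s =>
    refine inf_le_right.trans ?_
    refine le_iSup_of_le (s + 1) (le_iSup_of_le ?_ le_rfl)
    simp only [Finset.mem_range, Fintype.card_fin] at hm
    simp only [Finset.mem_Icc, Fintype.card_fin]
    omega

lemma key (lam : B) : mmMul A (mmStarLam A lam) = mmStarLam A lam := by
  funext k i
  show (⨆ j, A k j ⊓ (lam ⊓ mmPlus A i i ⊓ mmStar A j i)) = lam ⊓ mmPlus A i i ⊓ mmStar A k i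
  have h1 : ∀ j, A k j ⊓ (lam ⊓ mmPlus A i i ⊓ mmStar A j i)
      = (lam ⊓ mmPlus A i i) ⊓ (A k j ⊓ mmStar A j i) := fun j =>
    inf_left_comm _ _ _
  simp only [h1]
  rw [← inf_iSup_eq, mul_star_eq_plus]
  rw [inf_assoc, inf_assoc, plus_inf_star]

lemma mmVec_pow (x : Fin n → B) (hx : mmVec A x = x) (m : ℕ) :
    mmVec (mmPow A m) x = x := by
  induction m with
  | zero => exact mmVec_mmId x
  | succ m ih =>
    show mmVec (mmMul A (mmPow A m)) x = x
    rw [mmVec_mmMul, ih, hx]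

lemma star_inf_le (x : Fin n → B) (hx : mmVec A x = x) (k i : Fin n) :
    mmStar A k i ⊓ x i ≤ x k := by
  rw [mmStar, iSup_inf_eq]
  refine iSup_le fun m => ?_
  rw [iSup_inf_eq]
  refine iSup_le fun _ => ?_
  have : mmPow A m k i ⊓ x i ≤ mmVec (mmPow A m) x k :=
    le_iSup (fun j => mmPow A m k j ⊓ x j) i
  rwa [mmVec_pow A x hx m] at this

lemma forward (lam : B) (x : Fin n → B) (hx : mmVec A x = x) (hlam : ∀ i, x i ≤ lam) :
    x = mmVec (mmStarLam A lam) x := by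
  funext k
  refine le_antisymm ?_ ?_
  · -- x k ≤ (A*λ ⊗ x) k
    have step : ∀ j : Fin n, ∃ l, x j ≤ A j l ⊓ x l := by
      intro j
      have hj : (⨆ l, A j l ⊓ x l) = x j := congrFun hx j
      have : Nonempty (Fin n) := ⟨k⟩
      obtain ⟨l, hl⟩ := Finite.exists_max (fun l => A j l ⊓ x l)
      exact ⟨l, by rw [← hj]; exact iSup_le hl⟩
    choose w hw using step
    set f : ℕ → Fin n := fun t => w^[t] k with hf
    have hfs : ∀ t, f (t + 1) = w (f t) := fun t => Function.iterate_succ_apply' w t k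
    have hxf : ∀ t, x k ≤ x (f t) := by
      intro t
      induction t with
      | zero => exact le_rfl
      | succ t ih =>
        rw [hfs]
        exact ih.trans ((hw (f t)).trans inf_le_right)
    have hedge : ∀ t, x k ≤ A (f t) (f (t + 1)) := by
      intro t
      rw [hfs]
      exact (hxf t).trans ((hw (f t)).trans inf_le_left)
    obtain ⟨a', b', hab', hfab'⟩ :=
      Fintype.exists_ne_map_eq_of_card_lt (fun t : Fin (n + 1) => f t) (by simp)
    obtain ⟨a, b, hab, hbn, hfe⟩ : ∃ a b : ℕ, a < b ∧ b ≤ n ∧ f a = f b := by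
      rcases hab'.lt_or_gt with h | h
      · exact ⟨a', b', h, Nat.lt_succ_iff.1 b'.isLt, hfab'⟩
      · exact ⟨b', a', h, Nat.lt_succ_iff.1 a'.isLt, hfab'.symm⟩
    set v := f a with hv
    have h1 : x k ≤ mmPow A a k v := by
      have := (le_wgt A f (fun t _ => hedge t)).trans (wgt_le_pow A f a)
      exact this
    have h2 : x k ≤ mmPow A (b - a) v v := by
      set g : ℕ → Fin n := fun t => f (a + t) with hgdef
      have hle : x k ≤ wgt A g (b - a) := by
        refine le_wgt A g fun t _ => ?_
        have e : g (t + 1) = f (a + t + 1) := rfl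
        have e0 : g t = f (a + t) := rfl
        rw [e0, e]
        exact hedge (a + t)
      refine hle.trans ?_
      have := wgt_le_pow A g (b - a)
      have eg0 : g 0 = v := rfl
      have egm : g (b - a) = v := by
        show f (a + (b - a)) = v
        rw [show a + (b - a) = b by omega, ← hfe]
      rwa [eg0, egm] at this
    have h3 : mmPow A a k v ≤ mmStar A k v := by
      refine le_iSup_of_le a (le_iSup_of_le ?_ le_rfl)
      simp only [Finset.mem_range, Fintype.card_fin]
      omega
    have h4 : mmPow A (b - a) v v ≤ mmPlus A v v := by
      refine le_iSup_of_le (b - a) (le_iSup_of_le ?_ le_rfl)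
      simp only [Finset.mem_Icc, Fintype.card_fin]
      omega
    have hfin : x k ≤ mmStarLam A lam k v ⊓ x v := by
      show x k ≤ lam ⊓ mmPlus A v v ⊓ mmStar A k v ⊓ x v
      exact le_inf (le_inf (le_inf (hlam k) (h2.trans h4)) (h1.trans h3)) (hxf a)
    exact hfin.trans (le_iSup (fun i => mmStarLam A lam k i ⊓ x i) v)
  · -- (A*λ ⊗ x) k ≤ x k
    refine iSup_le fun i => ?_
    have h1 : mmStarLam A lam k i ⊓ x i ≤ mmStar A k i ⊓ x i :=
      inf_le_inf_right _ inf_le_right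
    exact h1.trans (star_inf_le A x hx k i)

end Stmt11Aux

open Stmt11Aux in
/-- The set of pure `λ`-eigenvectors of `A` (vectors `x` with `A ⊗ x = x`
and `x_i ≤ λ` for all `i`) is the max-min column space `{A*_λ ⊗ y : y ∈ Bⁿ}`; in particular,
each column of `A*_λ` is a pure `λ`-eigenvector of `A`. -/
theorem stmt11 {n : ℕ} (A : Matrix (Fin n) (Fin n) B) (lam : B) :
    (∀ x : Fin n → B,
      (mmVec A x = x ∧ ∀ i, x i ≤ lam) ↔ ∃ y : Fin n → B, x = mmVec (mmStarLam A lam) y) ∧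
    (∀ i : Fin n,
      (mmVec A (fun k => mmStarLam A lam k i) = fun k => mmStarLam A lam k i) ∧
      ∀ k, mmStarLam A lam k i ≤ lam) := by
  constructor
  · intro x
    constructor
    · rintro ⟨hx, hlam⟩
      exact ⟨x, forward A lam x hx hlam⟩
    · rintro ⟨y, rfl⟩
      constructor
      · rw [← mmVec_mmMul, key A lam]
      · intro i
        refine iSup_le fun j => ?_
        exact inf_le_left.trans (inf_le_left.trans inf_le_left)
  · intro i
    constructor
    · funext k
      exact congrFun (congrFun (key A lam) k) i
    · intro k
      exact inf_le_left.trans inf_le_left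
end
end

section
/- Let A ∈ B^{n×n}, λ ∈ B, K, L a partition of N = {1,...,n}, and let L_1 = { i ∈ L : max_{j∈L} a_{ij} ≥ λ } and L_2 = { i ∈ L : max_{j∈L} a_{ij} < λ }. For vectors x_K ∈ B^K with x_K ≤ λ·1_K and x_L ∈ B^L with x_L ≥ λ·1_L, the equation A_{LK} ⊗ x_K ⊕ A_{LL} ⊗ x_L = λ·1_L holds if and only if both A_{L_1 L} ⊗ x_L = λ·1_{L_1} and A_{L_2 K} ⊗ x_K = λ·1_{L_2} hold. -/
noncomputable section

/-- Submatrix of `A` with rows in `P` and columns in `Q`. -/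
def subM {n : ℕ} (A : Matrix (Fin n) (Fin n) B) (P Q : Finset (Fin n)) :
    Matrix ↥P ↥Q B :=
  fun i j => A i j

/-- Subvector of `x` indexed by `P`. -/
def subV {n : ℕ} (x : Fin n → B) (P : Finset (Fin n)) : ↥P → B :=
  fun i => x i

/-- `x` is a `(K,L)` `λ`-eigenvector of `A`: `A ⊗ x = λ ⊗ x`, `x_i ≤ λ` for `i ∈ K`,
`x_i ≥ λ` for `i ∈ L`. -/
def IsKLEig {n : ℕ} (A : Matrix (Fin n) (Fin n) B) (lam : B) (K L : Finset (Fin n))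
    (x : Fin n → B) : Prop :=
  mmVec A x = (fun i => lam ⊓ x i) ∧ (∀ i ∈ K, x i ≤ lam) ∧ (∀ i ∈ L, lam ≤ x i)

/-- `L₁ = {i ∈ L : max_{j∈L} a_{ij} ≥ λ}`. -/
def L1set {n : ℕ} (A : Matrix (Fin n) (Fin n) B) (lam : B) (L : Finset (Fin n)) :
    Finset (Fin n) :=
  L.filter fun i => lam ≤ ⨆ j ∈ L, A i j

/-- `L₂ = {i ∈ L : max_{j∈L} a_{ij} < λ}`. -/
def L2set {n : ℕ} (A : Matrix (Fin n) (Fin n) B) (lam : B) (L : Finset (Fin n)) :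
    Finset (Fin n) :=
  L.filter fun i => (⨆ j ∈ L, A i j) < lam

/-- For `x_K ≤ λ·1_K` and `x_L ≥ λ·1_L`, the equation
`A_{LK} ⊗ x_K ⊕ A_{LL} ⊗ x_L = λ·1_L` holds iff both `A_{L₁L} ⊗ x_L = λ·1_{L₁}` and
`A_{L₂K} ⊗ x_K = λ·1_{L₂}` hold. -/
theorem stmt14 {n : ℕ} (A : Matrix (Fin n) (Fin n) B) (lam : B) (K L : Finset (Fin n))
    (hU : K ∪ L = Finset.univ) (hD : Disjoint K L)
    (xK : ↥K → B) (xL : ↥L → B)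
    (hxK : ∀ i, xK i ≤ lam) (hxL : ∀ i, lam ≤ xL i) :
    (∀ i : ↥L, mmVec (subM A L K) xK i ⊔ mmVec (subM A L L) xL i = lam) ↔
      ((∀ i : ↥(L1set A lam L), mmVec (subM A (L1set A lam L) L) xL i = lam) ∧
       (∀ i : ↥(L2set A lam L), mmVec (subM A (L2set A lam L) K) xK i = lam)) := by

  classical
  have hKle : ∀ i : Fin n, (⨆ j : ↥K, A i j ⊓ xK j) ≤ lam := fun i =>
    iSup_le fun j => le_trans inf_le_right (hxK j)
  have hsub : ∀ i : Fin n, (⨆ j ∈ L, A i j) = ⨆ j : ↥L, A i (j : Fin n) := fun i => by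
    rw [iSup_subtype']
  have hL1 : ∀ i : Fin n, lam ≤ (⨆ j ∈ L, A i j) → lam ≤ ⨆ j : ↥L, A i j ⊓ xL j := by
    intro i hge
    rw [hsub i] at hge
    calc lam = lam ⊓ lam := (inf_idem lam).symm
    _ ≤ (⨆ j : ↥L, A i j) ⊓ lam := inf_le_inf_right _ hge
    _ = ⨆ j : ↥L, A i j ⊓ lam := iSup_inf_eq _ _
    _ ≤ ⨆ j : ↥L, A i j ⊓ xL j := iSup_mono fun j => inf_le_inf_left _ (hxL j)
  have hL2 : ∀ i : Fin n, (⨆ j ∈ L, A i j) < lam → (⨆ j : ↥L, A i j ⊓ xL j) < lam := by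
    intro i hlt
    rw [hsub i] at hlt
    exact lt_of_le_of_lt (iSup_mono fun j => inf_le_left) hlt
  constructor
  · intro h
    constructor
    · intro i
      obtain ⟨hiL, hge⟩ := Finset.mem_filter.mp i.2
      have e : (⨆ j : ↥K, A i.1 j ⊓ xK j) ⊔ (⨆ j : ↥L, A i.1 j ⊓ xL j) = lam :=
        h ⟨i.1, hiL⟩
      have h1 : (⨆ j : ↥L, A i.1 j ⊓ xL j) ≤ lam := le_sup_right.trans_eq e
      exact le_antisymm h1 (hL1 i.1 hge)
    · intro i
      obtain ⟨hiL, hlt⟩ := Finset.mem_filter.mp i.2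
      have e : (⨆ j : ↥K, A i.1 j ⊓ xK j) ⊔ (⨆ j : ↥L, A i.1 j ⊓ xL j) = lam :=
        h ⟨i.1, hiL⟩
      have h2 := hL2 i.1 hlt
      show (⨆ j : ↥K, A i.1 j ⊓ xK j) = lam
      rcases le_total (⨆ j : ↥K, A i.1 j ⊓ xK j) (⨆ j : ↥L, A i.1 j ⊓ xL j) with hc | hc
      · rw [sup_eq_right.mpr hc] at e
        exact absurd e (ne_of_lt h2)
      · rw [sup_eq_left.mpr hc] at e; exact e
  · rintro ⟨h1, h2⟩ i
    rcases le_or_gt lam (⨆ j ∈ L, A (i : Fin n) j) with hge | hlt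
    · have hm : (i : Fin n) ∈ L1set A lam L := Finset.mem_filter.mpr ⟨i.2, hge⟩
      have e : (⨆ j : ↥L, A (i : Fin n) j ⊓ xL j) = lam := h1 ⟨i.1, hm⟩
      show (⨆ j : ↥K, A (i : Fin n) j ⊓ xK j) ⊔ (⨆ j : ↥L, A (i : Fin n) j ⊓ xL j) = lam
      rw [e, sup_eq_right.mpr (hKle i.1)]
    · have hm : (i : Fin n) ∈ L2set A lam L := Finset.mem_filter.mpr ⟨i.2, hlt⟩
      have e : (⨆ j : ↥K, A (i : Fin n) j ⊓ xK j) = lam := h2 ⟨i.1, hm⟩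
      show (⨆ j : ↥K, A (i : Fin n) j ⊓ xK j) ⊔ (⨆ j : ↥L, A (i : Fin n) j ⊓ xL j) = lam
      rw [e, sup_eq_left.mpr (le_of_lt (hL2 i.1 hlt))]
end
end

section
/- Let A ∈ B^{n×n}, λ ∈ B, K, L a partition of N = {1,...,n}, with L_1, L', L̃ and Λ as defined. For x_L = λ·1_L ⊕ Λ_{L,L̃} ⊗ z_{L̃} with z_{L̃} ∈ B^{|L̃|}, the set of vectors x_K ∈ B^K with x_K ≤ λ·1_K solving A_{KK} ⊗ x_K ⊕ A_{KL} ⊗ x_L = x_K equals S_K(x_L,λ) = { λ ⊗ (A_{KK})^* ⊗ A_{KL} ⊗ 1_L ⊕ (A_{KK})^* ⊗ A_{K L̃} ⊗ Λ_{L̃,L̃} ⊗ z_{L̃} ⊕ (A_{KK})^*_λ ⊗ z_K : z_K ∈ B^{|K|} }. -/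
noncomputable section

/-- `L^{>λ,L₁} = {k ∈ L : max_{i ∈ L₁} a_{ik} > λ}`. -/
def LgtL1set {n : ℕ} (A : Matrix (Fin n) (Fin n) B) (lam : B) (L : Finset (Fin n)) :
    Finset (Fin n) :=
  L.filter fun k => lam < ⨆ i ∈ L1set A lam L, A i k

/-- `L^{>λ,K} = {ℓ ∈ L : max_{k ∈ K} ((A_{KK})* ⊗ A_{KL})_{kℓ} > λ}`. (The matrix
`(A_{KK})* ⊗ A_{K,N}` has, for `ℓ ∈ L`, exactly the same entries in column `ℓ` as
`(A_{KK})* ⊗ A_{KL}`.) -/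
def LgtKset {n : ℕ} (A : Matrix (Fin n) (Fin n) B) (lam : B) (K L : Finset (Fin n)) :
    Finset (Fin n) :=
  L.filter fun ℓ =>
    lam < ⨆ k : ↥K, mmMul (mmStar (subM A K K)) (fun (p : ↥K) (q : Fin n) => A p q) k ℓ

/-- `L' = L^{>λ,L₁} ∪ L^{>λ,K}`. -/
def LprimeSet {n : ℕ} (A : Matrix (Fin n) (Fin n) B) (lam : B) (K L : Finset (Fin n)) :
    Finset (Fin n) :=
  LgtL1set A lam L ∪ LgtKset A lam K L

/-- `L̃ = L \ L'`. -/
def LtilSet {n : ℕ} (A : Matrix (Fin n) (Fin n) B) (lam : B) (K L : Finset (Fin n)) :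
    Finset (Fin n) :=
  L \ LprimeSet A lam K L

/-- The submatrix `Λ_{P,Q}` of the matrix `Λ` with `Λ_{ii} = 1` and `Λ_{ij} = λ` for `i ≠ j`. -/
def LamSub {n : ℕ} (lam : B) (P Q : Finset (Fin n)) : Matrix ↥P ↥Q B :=
  fun p q => if (p : Fin n) = (q : Fin n) then 1 else lam

-- attainment
lemma exists_le_of_le_iSup {ι : Type*} [Fintype ι] {f : ι → B} {v : B}
    (hv : ⊥ < v) (h : v ≤ ⨆ i, f i) : ∃ i, v ≤ f i := by
  by_contra hc
  push_neg at hc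
  rw [← Finset.sup_univ_eq_iSup] at h
  rcases Finset.univ.eq_empty_or_nonempty (α := ι) with he | hne
  · rw [he] at h; simp only [Finset.sup_empty] at h
    exact absurd (lt_of_lt_of_le hv h) (lt_irrefl _)
  · obtain ⟨i, _, hi⟩ := Finset.exists_mem_eq_sup Finset.univ hne f
    rw [hi] at h
    exact absurd (lt_of_le_of_lt h (hc i)) (lt_irrefl _)

variable {α : Type*} [Fintype α] [DecidableEq α] {M : Matrix α α B}

lemma chain_le_pow {v : B} : ∀ (t : ℕ) (p : ℕ → α),
    (∀ s < t, v ≤ M (p s) (p (s+1))) → v ≤ mmPow M t (p 0) (p t) := by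
  intro t
  induction t with
  | zero => intro p _; simp only [mmPow, mmId, if_pos rfl]; exact unitInterval.le_one'
  | succ t ih =>
    intro p hp
    have h1 : v ≤ mmPow M t (p 1) (p (t+1)) := by
      have := ih (fun s => p (s+1)) (fun s hs => hp (s+1) (by omega))
      simpa using this
    have h0 : v ≤ M (p 0) (p 1) := hp 0 (by omega)
    calc v ≤ M (p 0) (p 1) ⊓ mmPow M t (p 1) (p (t+1)) := le_inf h0 h1
    _ ≤ _ := le_iSup (fun j => M (p 0) j ⊓ mmPow M t j (p (t+1))) (p 1)

lemma pow_le_chain {v : B} (hv : ⊥ < v) : ∀ (t : ℕ) (i j : α),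
    v ≤ mmPow M t i j → ∃ p : ℕ → α, p 0 = i ∧ p t = j ∧
      ∀ s < t, v ≤ M (p s) (p (s+1)) := by
  intro t
  induction t with
  | zero =>
    intro i j h
    simp only [mmPow, mmId] at h
    by_cases hij : i = j
    · exact ⟨fun _ => i, rfl, hij, by omega⟩
    · rw [if_neg hij] at h
      have : v ≤ ⊥ := h
      exact absurd (lt_of_lt_of_le hv this) (lt_irrefl _)
  | succ t ih =>
    intro i j h
    obtain ⟨k, hk⟩ := exists_le_of_le_iSup hv h
    obtain ⟨q, hq0, hqt, hqe⟩ := ih k j (le_trans hk inf_le_right)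
    refine ⟨fun s => if s = 0 then i else q (s - 1), rfl, by simp [hqt], ?_⟩
    intro s hs
    rcases Nat.eq_zero_or_pos s with rfl | hspos
    · simpa [hq0] using le_trans hk inf_le_left
    · have h1 : s ≠ 0 := by omega
      have h2 : s + 1 ≠ 0 := by omega
      simp only [if_neg h1, if_neg h2]
      have he : s - 1 + 1 = s := by omega
      have := hqe (s-1) (by omega)
      rw [he] at this
      have h3 : s + 1 - 1 = s - 1 + 1 := by omega
      rw [h3, he]
      exact this

set_option linter.unusedSectionVars false

lemma pow_le_star_of_lt {t : ℕ} (ht : t < Fintype.card α) (i j : α) :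
    mmPow M t i j ≤ mmStar M i j := by
  apply le_iSup_of_le t
  rw [iSup_pos (Finset.mem_range.mpr ht)]

lemma pow_le_plus {t : ℕ} (ht1 : 1 ≤ t) (ht2 : t ≤ Fintype.card α) (i j : α) :
    mmPow M t i j ≤ mmPlus M i j := by
  apply le_iSup_of_le t
  rw [iSup_pos (Finset.mem_Icc.mpr ⟨ht1, ht2⟩)]

lemma chain_shortcut {v : B} (p : ℕ → α) (m : ℕ)
    (hpe : ∀ s < m, v ≤ M (p s) (p (s+1))) (a b : ℕ) (hab : a < b) (hbm : b ≤ m)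
    (heq : p a = p b) : v ≤ mmPow M (m - (b - a)) (p 0) (p m) := by
  set d := b - a with hd
  have hd1 : 1 ≤ d := by omega
  set q : ℕ → α := fun s => if s ≤ a then p s else p (s + d) with hq
  have hq0 : q 0 = p 0 := by simp [hq]
  have hqend : q (m - d) = p m := by
    rcases eq_or_lt_of_le (show a ≤ m - d by omega) with hc | hc
    · simp only [hq, if_pos (le_of_eq hc.symm)]
      rw [← hc, heq]
      congr 1
      omega
    · simp only [hq, if_neg (by omega : ¬ (m - d ≤ a))]
      congr 1
      omega
  have hedges : ∀ s < m - d, v ≤ M (q s) (q (s+1)) := by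
    intro s hs
    by_cases h1 : s + 1 ≤ a
    · simp only [hq, if_pos (by omega : s ≤ a), if_pos h1]
      exact hpe s (by omega)
    · by_cases h2 : s ≤ a
      · have hsa : s = a := by omega
        simp only [hq, if_pos h2, if_neg h1]
        rw [hsa, heq]
        have hb1 : a + 1 + d = b + 1 := by omega
        rw [hb1]
        exact hpe b (by omega)
      · simp only [hq, if_neg h2, if_neg (by omega : ¬ (s + 1 ≤ a))]
        have : s + 1 + d = (s + d) + 1 := by omega
        rw [this]
        exact hpe (s + d) (by omega)
  have := chain_le_pow (m - d) q hedges
  rwa [hq0, hqend] at this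

lemma pow_card_le_star (i j : α) :
    mmPow M (Fintype.card α) i j ≤ mmStar M i j := by
  set m := Fintype.card α with hm
  set v := mmPow M m i j with hv
  rcases eq_bot_or_bot_lt v with hb | hb
  · rw [hb]; exact bot_le
  have hm1 : 0 < m := Fintype.card_pos_iff.mpr ⟨i⟩
  obtain ⟨p, hp0, hpt, hpe⟩ := pow_le_chain hb m i j (le_refl v)
  obtain ⟨a, b, hab, heq⟩ := Fintype.exists_ne_map_eq_of_card_lt
    (fun s : Fin (m+1) => p s) (by simp [hm])
  have key : ∀ (a b : Fin (m+1)), (a:ℕ) < (b:ℕ) → p a = p b →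
      mmPow M m i j ≤ mmStar M i j := by
    intro a b hlt heq
    have hbm : (b:ℕ) ≤ m := by have := b.isLt; omega
    have h1 := chain_shortcut p m hpe a b hlt hbm heq
    rw [hp0, hpt] at h1
    refine le_trans h1 (pow_le_star_of_lt ?_ i j)
    omega
  rcases lt_or_gt_of_ne (fun h => hab (Fin.ext h) : (a:ℕ) ≠ (b:ℕ)) with h | h
  · exact key a b h heq
  · exact key b a h heq.symm

lemma pow_le_star {t : ℕ} (ht : t ≤ Fintype.card α) (i j : α) :
    mmPow M t i j ≤ mmStar M i j := by
  rcases lt_or_eq_of_le ht with h | h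
  · exact pow_le_star_of_lt h i j
  · rw [h]; exact pow_card_le_star i j

lemma mul_star_le (i j : α) : (⨆ k, M i k ⊓ mmStar M k j) ≤ mmStar M i j := by
  refine iSup_le fun k => ?_
  rw [mmStar, inf_iSup_eq]
  refine iSup_le fun t => ?_
  rw [inf_iSup_eq]
  refine iSup_le fun ht => ?_
  have ht' : t < Fintype.card α := Finset.mem_range.mp ht
  have h1 : M i k ⊓ mmPow M t k j ≤ mmPow M (t+1) i j :=
    le_iSup (fun k' => M i k' ⊓ mmPow M t k' j) k
  exact le_trans h1 (pow_le_star ht' i j)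

lemma star_refl (i : α) : (1 : B) ≤ mmStar M i i := by
  have h0 : (0:ℕ) < Fintype.card α := Fintype.card_pos_iff.mpr ⟨i⟩
  have := pow_le_star_of_lt (M := M) h0 i i
  simpa [mmPow, mmId] using this

lemma plus_le_unfold (k : α) : mmPlus M k k ≤ ⨆ j, M k j ⊓ mmStar M j k := by
  refine iSup_le fun t => iSup_le fun ht => ?_
  obtain ⟨ht1, ht2⟩ := Finset.mem_Icc.mp ht
  obtain ⟨s, rfl⟩ : ∃ s, t = s + 1 := ⟨t - 1, by omega⟩
  show (⨆ j, M k j ⊓ mmPow M s j k) ≤ _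
  refine iSup_le fun j => le_iSup_of_le j (inf_le_inf_left _ ?_)
  exact pow_le_star (by omega) j k

lemma star_plus_unfold (i k : α) :
    mmStar M i k ⊓ mmPlus M k k ≤ ⨆ j, M i j ⊓ (mmStar M j k ⊓ mmPlus M k k) := by
  rw [mmStar, iSup_inf_eq]
  refine iSup_le fun t => ?_
  rw [iSup_inf_eq]
  refine iSup_le fun ht => ?_
  have ht' : t < Fintype.card α := Finset.mem_range.mp ht
  rcases Nat.eq_zero_or_pos t with rfl | htpos
  · -- t = 0 : entry is mmId
    show mmId α i k ⊓ mmPlus M k k ≤ _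
    by_cases hik : i = k
    · subst hik
      rw [mmId, if_pos rfl]
      have h1 : mmPlus M i i ≤ ⨆ j, M i j ⊓ mmStar M j i := plus_le_unfold i
      calc (1:B) ⊓ mmPlus M i i ≤ mmPlus M i i ⊓ mmPlus M i i := by
            rw [inf_idem]; exact inf_le_right
        _ ≤ (⨆ j, M i j ⊓ mmStar M j i) ⊓ mmPlus M i i := inf_le_inf_right _ h1
        _ = ⨆ j, M i j ⊓ mmStar M j i ⊓ mmPlus M i i := by rw [iSup_inf_eq]
        _ ≤ _ := by
            refine iSup_le fun j => le_iSup_of_le j ?_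
            rw [inf_assoc]
    · rw [mmId, if_neg hik]
      have : (0:B) = ⊥ := rfl
      rw [this, bot_inf_eq]
      exact bot_le
  · obtain ⟨s, rfl⟩ : ∃ s, t = s + 1 := ⟨t - 1, by omega⟩
    show (⨆ j, M i j ⊓ mmPow M s j k) ⊓ mmPlus M k k ≤ _
    rw [iSup_inf_eq]
    refine iSup_le fun j => le_iSup_of_le j ?_
    rw [inf_assoc]
    exact inf_le_inf_left _ (inf_le_inf_right _ (pow_le_star (by omega) j k))

lemma mmVec_mmMul {β γ : Type*} [Fintype β] [Fintype γ] (P : Matrix α β B)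
    (Q : Matrix β γ B) (y : γ → B) (i : α) :
    mmVec (mmMul P Q) y i = mmVec P (mmVec Q y) i := by
  show (⨆ k, (⨆ j, P i j ⊓ Q j k) ⊓ y k) = ⨆ j, P i j ⊓ ⨆ k, Q j k ⊓ y k
  calc (⨆ k, (⨆ j, P i j ⊓ Q j k) ⊓ y k)
      = ⨆ k, ⨆ j, P i j ⊓ Q j k ⊓ y k := by
        refine iSup_congr fun k => ?_
        rw [iSup_inf_eq]
    _ = ⨆ j, ⨆ k, P i j ⊓ Q j k ⊓ y k := iSup_comm
    _ = ⨆ j, P i j ⊓ ⨆ k, Q j k ⊓ y k := by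
        refine iSup_congr fun j => ?_
        rw [inf_iSup_eq]
        refine iSup_congr fun k => ?_
        rw [inf_assoc]

-- if (⨆ j, M i j ⊓ x j) ≤ x i for all i, then powers applied to x stay below x
lemma vec_pow_le {x : α → B} (hfix : ∀ i, (⨆ j, M i j ⊓ x j) ≤ x i) :
    ∀ (t : ℕ) (i : α), (⨆ k, mmPow M t i k ⊓ x k) ≤ x i := by
  intro t
  induction t with
  | zero =>
    intro i
    refine iSup_le fun k => ?_
    show (if i = k then (1:B) else 0) ⊓ x k ≤ x i
    by_cases h : i = k
    · subst h; rw [if_pos rfl]; exact inf_le_right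
    · rw [if_neg h]
      have : (0:B) = ⊥ := rfl
      rw [this, bot_inf_eq]; exact bot_le
  | succ t ih =>
    intro i
    show (⨆ k, (⨆ j, M i j ⊓ mmPow M t j k) ⊓ x k) ≤ x i
    have h1 : (⨆ k, (⨆ j, M i j ⊓ mmPow M t j k) ⊓ x k)
        = ⨆ j, M i j ⊓ ⨆ k, mmPow M t j k ⊓ x k := by
      calc (⨆ k, (⨆ j, M i j ⊓ mmPow M t j k) ⊓ x k)
          = ⨆ k, ⨆ j, M i j ⊓ mmPow M t j k ⊓ x k := by
            refine iSup_congr fun k => ?_; rw [iSup_inf_eq]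
        _ = ⨆ j, ⨆ k, M i j ⊓ mmPow M t j k ⊓ x k := iSup_comm
        _ = ⨆ j, M i j ⊓ ⨆ k, mmPow M t j k ⊓ x k := by
            refine iSup_congr fun j => ?_
            rw [inf_iSup_eq]
            exact iSup_congr fun k => by rw [inf_assoc]
    rw [h1]
    refine le_trans ?_ (hfix i)
    refine iSup_le fun j => le_iSup_of_le j (inf_le_inf_left _ (ih j))

lemma star_fix_le {x y : α → B} (hfix : ∀ i, (⨆ j, M i j ⊓ x j) ≤ x i)
    (hyx : ∀ k, y k ≤ x k) (i : α) : mmVec (mmStar M) y i ≤ x i := by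
  refine iSup_le fun k => ?_
  show mmStar M i k ⊓ y k ≤ x i
  rw [mmStar, iSup_inf_eq]
  refine iSup_le fun t => ?_
  rw [iSup_inf_eq]
  refine iSup_le fun _ => ?_
  refine le_trans ?_ (vec_pow_le hfix t i)
  exact le_iSup_of_le k (inf_le_inf_left _ (hyx k))

-- star unfolding from the left: S⊗y ≤ y ⊔ M⊗(S⊗y)
lemma star_unfold (y : α → B) (i : α) :
    mmVec (mmStar M) y i ≤ y i ⊔ ⨆ j, M i j ⊓ mmVec (mmStar M) y j := by
  refine iSup_le fun k => ?_
  show mmStar M i k ⊓ y k ≤ _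
  rw [mmStar, iSup_inf_eq]
  refine iSup_le fun t => ?_
  rw [iSup_inf_eq]
  refine iSup_le fun ht => ?_
  have ht' : t < Fintype.card α := Finset.mem_range.mp ht
  rcases Nat.eq_zero_or_pos t with rfl | htpos
  · show mmId α i k ⊓ y k ≤ _
    by_cases h : i = k
    · subst h; rw [mmId, if_pos rfl]
      exact le_sup_of_le_left (le_trans inf_le_right (le_refl _))
    · rw [mmId, if_neg h]
      have : (0:B) = ⊥ := rfl
      rw [this, bot_inf_eq]; exact bot_le
  · obtain ⟨s, rfl⟩ : ∃ s, t = s + 1 := ⟨t - 1, by omega⟩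
    show (⨆ j, M i j ⊓ mmPow M s j k) ⊓ y k ≤ _
    rw [iSup_inf_eq]
    refine iSup_le fun j => ?_
    refine le_sup_of_le_right (le_iSup_of_le j ?_)
    rw [inf_assoc]
    refine inf_le_inf_left _ ?_
    refine le_trans (inf_le_inf_right _ (pow_le_star (by omega) j k)) ?_
    exact le_iSup (fun k' => mmStar M j k' ⊓ y k') k

-- the main chain/pigeonhole upper bound for solutions of x = M⊗x ⊔ b
lemma fix_upper_bound {x b : α → B}
    (hfix : ∀ i, (⨆ j, M i j ⊓ x j) ⊔ b i = x i) (i : α) :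
    x i ≤ (⨆ k, mmStar M i k ⊓ b k) ⊔ ⨆ k, mmPlus M k k ⊓ (mmStar M i k ⊓ x k) := by
  set v := x i with hv
  rcases eq_bot_or_bot_lt v with hb | hb
  · exact hb ▸ bot_le
  set m := Fintype.card α with hm
  have hm1 : 0 < m := Fintype.card_pos_iff.mpr ⟨i⟩
  set G := (⨆ k, mmStar M i k ⊓ b k) ⊔ ⨆ k, mmPlus M k k ⊓ (mmStar M i k ⊓ x k) with hG
  suffices h : v ≤ G by exact h
  have claim : ∀ t, t ≤ m → v ≤ G ∨ ∃ p : ℕ → α, p 0 = i ∧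
      (∀ s < t, v ≤ M (p s) (p (s+1))) ∧ (∀ s ≤ t, v ≤ x (p s)) := by
    intro t
    induction t with
    | zero =>
      intro _
      exact Or.inr ⟨fun _ => i, rfl, by omega, fun s _ => le_refl v⟩
    | succ t ih =>
      intro htm
      rcases ih (by omega) with hG' | ⟨p, hp0, hpe, hpx⟩
      · exact Or.inl hG'
      set j := p t with hj
      have hxj : v ≤ x j := hpx t (le_refl t)
      by_cases hbj : v ≤ b j
      · -- terminate: v ≤ S i j ⊓ b j
        left
        have h1 : v ≤ mmPow M t i j := by
          have := chain_le_pow t p hpe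
          rwa [hp0] at this
        have h2 : v ≤ mmStar M i j := le_trans h1 (pow_le_star (by omega) i j)
        exact le_sup_of_le_left (le_iSup_of_le j (le_inf h2 hbj))
      · -- extend the chain
        right
        have h1 : v ≤ (⨆ j', M j j' ⊓ x j') ⊔ b j := by rw [hfix j]; exact hxj
        have h2 : v ≤ ⨆ j', M j j' ⊓ x j' := by
          rcases le_sup_iff.mp h1 with h | h
          · exact h
          · exact absurd h hbj
        obtain ⟨j', hj'⟩ := exists_le_of_le_iSup hb h2
        refine ⟨fun s => if s ≤ t then p s else j', by simp [hp0], ?_, ?_⟩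
        · intro s hs
          by_cases h3 : s + 1 ≤ t
          · simp only [if_pos (by omega : s ≤ t), if_pos h3]
            exact hpe s (by omega)
          · have hst : s = t := by omega
            simp only [hst, if_pos (le_refl t), if_neg (by omega : ¬ (t + 1 ≤ t))]
            exact le_trans hj' inf_le_left
        · intro s hs
          by_cases h3 : s ≤ t
          · simp only [if_pos h3]; exact hpx s h3
          · simp only [if_neg h3]
            exact le_trans hj' inf_le_right
  rcases claim m (le_refl m) with h | ⟨p, hp0, hpe, hpx⟩
  · exact h
  -- pigeonhole
  obtain ⟨a, b', hab, heq⟩ := Fintype.exists_ne_map_eq_of_card_lt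
    (fun s : Fin (m+1) => p s) (by simp [hm])
  have key : ∀ (a b' : Fin (m+1)), (a:ℕ) < (b':ℕ) → p a = p b' → v ≤ G := by
    intro a b' hlt heqq
    set k := p (a:ℕ) with hk
    have hbm : (b':ℕ) ≤ m := by have := b'.isLt; omega
    -- prefix: v ≤ M^a i k, a < m
    have hpre : v ≤ mmStar M i k := by
      have h1 := chain_le_pow (v := v) (a:ℕ) p (fun s hs => hpe s (by omega))
      rw [hp0] at h1
      exact le_trans h1 (pow_le_star (by omega) i k)
    -- cycle: v ≤ M^(b-a) k k
    have hcyc : v ≤ mmPlus M k k := by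
      set d := (b':ℕ) - (a:ℕ) with hd
      have h1 := chain_le_pow (v := v) d (fun s => p ((a:ℕ) + s))
        (fun s hs => by
          have := hpe ((a:ℕ) + s) (by omega)
          have he : (a:ℕ) + s + 1 = (a:ℕ) + (s+1) := by omega
          rwa [he] at this)
      simp only [Nat.add_zero] at h1
      have he2 : (a:ℕ) + d = (b':ℕ) := by omega
      rw [he2, ← heqq] at h1
      exact le_trans h1 (pow_le_plus (by omega) (by omega) k k)
    have hxk : v ≤ x k := hpx (a:ℕ) (by omega)
    exact le_sup_of_le_right (le_iSup_of_le k (le_inf hcyc (le_inf hpre hxk)))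
  rcases lt_or_gt_of_ne (fun h => hab (Fin.ext h) : (a:ℕ) ≠ (b':ℕ)) with h | h
  · exact key a b' h heq
  · exact key b' a h heq.symm

lemma le_starvec (y : α → B) (i : α) : y i ≤ mmVec (mmStar M) y i :=
  le_iSup_of_le i (le_inf (le_trans unitInterval.le_one' (star_refl i)) (le_refl _))

lemma mul_starvec_le (y : α → B) (i j : α) :
    M i j ⊓ mmVec (mmStar M) y j ≤ mmVec (mmStar M) y i := by
  show M i j ⊓ (⨆ k, mmStar M j k ⊓ y k) ≤ _
  rw [inf_iSup_eq]
  refine iSup_le fun k => le_iSup_of_le k ?_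
  have h1 : M i j ⊓ mmStar M j k ≤ mmStar M i k :=
    le_trans (le_iSup (fun j' => M i j' ⊓ mmStar M j' k) j) (mul_star_le i k)
  calc M i j ⊓ (mmStar M j k ⊓ y k) = (M i j ⊓ mmStar M j k) ⊓ y k := by rw [inf_assoc]
    _ ≤ mmStar M i k ⊓ y k := inf_le_inf_right _ h1

lemma mul_starlamvec_le (lam : B) (z : α → B) (i j : α) :
    M i j ⊓ mmVec (mmStarLam M lam) z j ≤ mmVec (mmStarLam M lam) z i := by
  show M i j ⊓ (⨆ k, (lam ⊓ mmPlus M k k ⊓ mmStar M j k) ⊓ z k) ≤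
    ⨆ k, (lam ⊓ mmPlus M k k ⊓ mmStar M i k) ⊓ z k
  rw [inf_iSup_eq]
  refine iSup_le fun k => le_iSup_of_le k ?_
  have h1 : M i j ⊓ mmStar M j k ≤ mmStar M i k :=
    le_trans (le_iSup (fun j' => M i j' ⊓ mmStar M j' k) j) (mul_star_le i k)
  refine le_inf (le_inf (le_inf ?_ ?_) ?_) ?_
  · exact inf_le_right.trans (inf_le_left.trans (inf_le_left.trans inf_le_left))
  · exact inf_le_right.trans (inf_le_left.trans (inf_le_left.trans inf_le_right))
  · refine le_trans (le_inf inf_le_left (inf_le_right.trans (inf_le_left.trans inf_le_right))) h1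
  · exact inf_le_right.trans inf_le_right

lemma inf_starvec (lam : B) (y : α → B) (i : α) :
    lam ⊓ mmVec (mmStar M) y i = mmVec (mmStar M) y i ⊓ lam := inf_comm _ _

lemma scalar_starvec (lam : B) (y : α → B) (i : α) :
    lam ⊓ mmVec (mmStar M) y i = mmVec (mmStar M) (fun k => lam ⊓ y k) i := by
  show lam ⊓ (⨆ k, mmStar M i k ⊓ y k) = ⨆ k, mmStar M i k ⊓ (lam ⊓ y k)
  rw [inf_iSup_eq]
  exact iSup_congr fun k => by rw [inf_left_comm]

lemma starlam_le_mul (lam : B) (z : α → B) (i : α) :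
    mmVec (mmStarLam M lam) z i ≤ ⨆ j, M i j ⊓ mmVec (mmStarLam M lam) z j := by
  refine iSup_le fun k => ?_
  show (lam ⊓ mmPlus M k k ⊓ mmStar M i k) ⊓ z k ≤ _
  have h1 : mmStar M i k ⊓ mmPlus M k k ≤ ⨆ j, M i j ⊓ (mmStar M j k ⊓ mmPlus M k k) :=
    star_plus_unfold i k
  have h2 : (lam ⊓ mmPlus M k k ⊓ mmStar M i k) ⊓ z k ≤
      (mmStar M i k ⊓ mmPlus M k k) ⊓ (lam ⊓ z k) := by
    refine le_inf (le_inf ?_ ?_) (le_inf ?_ ?_)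
    · exact inf_le_left.trans inf_le_right
    · exact inf_le_left.trans (inf_le_left.trans inf_le_right)
    · exact inf_le_left.trans (inf_le_left.trans inf_le_left)
    · exact inf_le_right
  refine le_trans h2 ?_
  refine le_trans (inf_le_inf_right _ h1) ?_
  rw [iSup_inf_eq]
  refine iSup_le fun j => le_iSup_of_le j ?_
  rw [inf_assoc]
  refine inf_le_inf_left _ ?_
  refine le_trans ?_ (le_iSup (fun k' => (lam ⊓ mmPlus M k' k' ⊓ mmStar M j k') ⊓ z k') k)
  refine le_inf (le_inf (le_inf ?_ ?_) ?_) ?_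
  · exact inf_le_right.trans inf_le_left
  · exact inf_le_left.trans inf_le_right
  · exact inf_le_left.trans inf_le_left
  · exact inf_le_right.trans inf_le_right

/-- For `x_L = λ·1_L ⊕ Λ_{L,L̃} ⊗ z_{L̃}`, the set of vectors
`x_K ≤ λ·1_K` solving `A_{KK} ⊗ x_K ⊕ A_{KL} ⊗ x_L = x_K` equals
`S_K(x_L,λ) = { λ ⊗ (A_{KK})* ⊗ A_{KL} ⊗ 1_L ⊕ (A_{KK})* ⊗ A_{KL̃} ⊗ Λ_{L̃,L̃} ⊗ z_{L̃}`
`⊕ (A_{KK})*_λ ⊗ z_K : z_K ∈ B^{|K|} }`. -/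
theorem stmt16 {n : ℕ} (A : Matrix (Fin n) (Fin n) B) (lam : B) (K L : Finset (Fin n))
    (hU : K ∪ L = Finset.univ) (hD : Disjoint K L)
    (zLt : ↥(LtilSet A lam K L) → B) (xL : ↥L → B)
    (hxL : xL = fun ℓ => lam ⊔ mmVec (LamSub lam L (LtilSet A lam K L)) zLt ℓ)
    (xK : ↥K → B) :
    ((∀ i, mmVec (subM A K K) xK i ⊔ mmVec (subM A K L) xL i = xK i) ∧
      ∀ i, xK i ≤ lam) ↔
      ∃ zK : ↥K → B,
        xK = fun i =>
          (lam ⊓ mmVec (mmMul (mmStar (subM A K K)) (subM A K L)) (fun _ => 1) i) ⊔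
          mmVec (mmMul (mmMul (mmStar (subM A K K)) (subM A K (LtilSet A lam K L)))
            (LamSub lam (LtilSet A lam K L) (LtilSet A lam K L))) zLt i ⊔
          mmVec (mmStarLam (subM A K K) lam) zK i := by
  classical
  have hLtL : LtilSet A lam K L ⊆ L := Finset.sdiff_subset
  set c : ↥K → B := mmVec (subM A K L) (fun _ => 1) with hcdef
  set d' : ↥K → B := mmVec (subM A K (LtilSet A lam K L)) (mmVec (LamSub lam (LtilSet A lam K L) (LtilSet A lam K L)) zLt) with hd'def
  set bb : ↥K → B := mmVec (subM A K L) xL with hbbdef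
  have hxLfact : ∀ ℓ : ↥L, xL ℓ = lam ⊔ mmVec (LamSub lam L (LtilSet A lam K L)) zLt ℓ := fun ℓ => by
    rw [hxL]
  set incl : ↥(LtilSet A lam K L) → ↥L := fun t => (⟨(t : Fin n), hLtL t.2⟩ : ↥L) with hincl
  have hu_eq : ∀ i, mmVec (mmMul (mmStar (subM A K K)) (subM A K L)) (fun _ => (1:B)) i = mmVec (mmStar (subM A K K)) c i :=
    fun i => mmVec_mmMul (mmStar (subM A K K)) (subM A K L) (fun _ => 1) i
  have hw_eq : ∀ i, mmVec (mmMul (mmMul (mmStar (subM A K K)) (subM A K (LtilSet A lam K L))) (LamSub lam (LtilSet A lam K L) (LtilSet A lam K L))) zLt i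
      = mmVec (mmStar (subM A K K)) d' i := fun i =>
    (mmVec_mmMul (mmMul (mmStar (subM A K K)) (subM A K (LtilSet A lam K L))) (LamSub lam (LtilSet A lam K L) (LtilSet A lam K L)) zLt i).trans
      (mmVec_mmMul (mmStar (subM A K K)) (subM A K (LtilSet A lam K L)) (mmVec (LamSub lam (LtilSet A lam K L) (LtilSet A lam K L)) zLt) i)
  have hxLlam : ∀ ℓ, lam ≤ xL ℓ := fun ℓ => by rw [hxLfact ℓ]; exact le_sup_left
  have hcb : ∀ k, lam ⊓ c k ≤ bb k := by
    intro k
    show lam ⊓ (⨆ ℓ, (subM A K L) k ℓ ⊓ 1) ≤ ⨆ ℓ, (subM A K L) k ℓ ⊓ xL ℓ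
    rw [inf_iSup_eq]
    exact iSup_le fun ℓ => le_iSup_of_le ℓ
      (le_inf (inf_le_right.trans inf_le_left) (inf_le_left.trans (hxLlam ℓ)))
  have hLamle : ∀ t : ↥(LtilSet A lam K L), mmVec (LamSub lam (LtilSet A lam K L) (LtilSet A lam K L)) zLt t ≤ xL (incl t) := by
    intro t
    rw [hxLfact (incl t)]
    refine le_trans (le_of_eq ?_) le_sup_right
    rfl
  have hd'b : ∀ k, d' k ≤ bb k := by
    intro k
    show (⨆ t, (subM A K (LtilSet A lam K L)) k t ⊓ mmVec (LamSub lam (LtilSet A lam K L) (LtilSet A lam K L)) zLt t) ≤ ⨆ ℓ, (subM A K L) k ℓ ⊓ xL ℓ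
    refine iSup_le fun t => le_iSup_of_le (incl t) ?_
    exact inf_le_inf (le_of_eq rfl) (hLamle t)
  have hble : ∀ k, bb k ≤ (lam ⊓ c k) ⊔ d' k := by
    intro k
    show (⨆ ℓ, (subM A K L) k ℓ ⊓ xL ℓ) ≤ _
    refine iSup_le fun ℓ => ?_
    rw [hxLfact ℓ, inf_sup_left]
    refine sup_le ?_ ?_
    · refine le_sup_of_le_left (le_inf inf_le_right ?_)
      show _ ≤ ⨆ ℓ', (subM A K L) k ℓ' ⊓ 1
      exact le_iSup_of_le ℓ (le_inf inf_le_left unitInterval.le_one')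
    · show (subM A K L) k ℓ ⊓ (⨆ t : ↥(LtilSet A lam K L), (if (ℓ:Fin n) = (t:Fin n) then (1:B) else lam) ⊓ zLt t) ≤ _
      rw [inf_iSup_eq]
      refine iSup_le fun t => ?_
      by_cases hmem : (ℓ : Fin n) ∈ (LtilSet A lam K L)
      · refine le_sup_of_le_right ?_
        show _ ≤ ⨆ t0 : ↥(LtilSet A lam K L), (subM A K (LtilSet A lam K L)) k t0 ⊓ mmVec (LamSub lam (LtilSet A lam K L) (LtilSet A lam K L)) zLt t0
        refine le_iSup_of_le ⟨(ℓ:Fin n), hmem⟩ ?_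
        refine inf_le_inf (le_of_eq rfl) ?_
        exact le_iSup_of_le t (le_of_eq rfl)
      · have hne : (ℓ : Fin n) ≠ (t : Fin n) := fun h => hmem (h ▸ t.2)
        rw [if_neg hne]
        refine le_sup_of_le_left (le_inf (inf_le_right.trans inf_le_left) ?_)
        show _ ≤ ⨆ ℓ', (subM A K L) k ℓ' ⊓ 1
        exact le_iSup_of_le ℓ (le_inf inf_le_left unitInterval.le_one')
  have hLtcol : ∀ (i : ↥K) (t : ↥(LtilSet A lam K L)), mmMul (mmStar (subM A K K)) (subM A K (LtilSet A lam K L)) i t ≤ lam := by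
    intro i t
    have ht : (t:Fin n) ∈ L ∧ (t:Fin n) ∉ LprimeSet A lam K L := Finset.mem_sdiff.mp t.2
    have htn : (t:Fin n) ∉ LprimeSet A lam K L := ht.2
    rw [LprimeSet, Finset.mem_union] at htn
    have htn2 : (t:Fin n) ∉ LgtKset A lam K L := fun h => htn (Or.inr h)
    rw [LgtKset, Finset.mem_filter] at htn2
    have hsup : ¬ (lam < ⨆ k : ↥K,
        mmMul (mmStar (subM A K K)) (fun (p : ↥K) (q : Fin n) => A p q) k (t:Fin n)) :=
      fun h => htn2 ⟨ht.1, h⟩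
    have hsup2 := not_lt.mp hsup
    refine le_trans ?_ hsup2
    exact le_iSup (fun k => mmMul (mmStar (subM A K K))
      (fun (p : ↥K) (q : Fin n) => A p q) k (t:Fin n)) i
  constructor
  · rintro ⟨heq, hlam⟩
    refine ⟨xK, funext fun i => ?_⟩
    have hfix : ∀ i0 : ↥K, (⨆ j, (subM A K K) i0 j ⊓ xK j) ⊔ bb i0 = xK i0 := fun i0 => heq i0
    have hfle : ∀ i0, (⨆ j, (subM A K K) i0 j ⊓ xK j) ≤ xK i0 :=
      fun i0 => le_sup_left.trans (le_of_eq (hfix i0))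
    have hbx : ∀ k, bb k ≤ xK k := fun k => le_sup_right.trans (le_of_eq (hfix k))
    rw [hu_eq i, hw_eq i]
    apply le_antisymm
    · have step := fix_upper_bound (M := subM A K K) (x := xK) (b := bb) hfix i
      refine le_trans step (sup_le ?_ ?_)
      · refine le_trans ?_ le_sup_left
        refine iSup_le fun k => ?_
        have h1 : mmStar (subM A K K) i k ⊓ bb k ≤ mmStar (subM A K K) i k ⊓ ((lam ⊓ c k) ⊔ d' k) :=
          inf_le_inf_left _ (hble k)
        rw [inf_sup_left] at h1
        refine le_trans h1 (sup_le ?_ ?_)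
        · refine le_sup_of_le_left (le_inf (inf_le_right.trans inf_le_left) ?_)
          exact le_iSup_of_le k (le_inf inf_le_left (inf_le_right.trans inf_le_right))
        · exact le_sup_of_le_right (le_iSup (fun k' => mmStar (subM A K K) i k' ⊓ d' k') k)
      · refine le_trans ?_ le_sup_right
        refine iSup_le fun k => le_iSup_of_le k ?_
        refine le_inf (le_inf (le_inf ?_ ?_) ?_) ?_
        · exact inf_le_right.trans (inf_le_right.trans (hlam k))
        · exact inf_le_left
        · exact inf_le_right.trans inf_le_left
        · exact inf_le_right.trans inf_le_right
    · refine sup_le (sup_le ?_ ?_) ?_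
      · rw [scalar_starvec]
        exact star_fix_le hfle (fun k => (hcb k).trans (hbx k)) i
      · exact star_fix_le hfle (fun k => (hd'b k).trans (hbx k)) i
      · refine le_trans ?_ (star_fix_le (y := xK) hfle (fun k => le_refl _) i)
        exact iSup_le fun k => le_iSup_of_le k (inf_le_inf_right _ inf_le_right)
  · rintro ⟨zK, hzK⟩
    subst hzK
    set x : ↥K → B := fun i =>
      (lam ⊓ mmVec (mmMul (mmStar (subM A K K)) (subM A K L)) (fun _ => 1) i) ⊔
      mmVec (mmMul (mmMul (mmStar (subM A K K)) (subM A K (LtilSet A lam K L))) (LamSub lam (LtilSet A lam K L) (LtilSet A lam K L))) zLt i ⊔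
      mmVec (mmStarLam (subM A K K) lam) zK i with hxdef
    have hx : ∀ i, x i = (lam ⊓ mmVec (mmStar (subM A K K)) c i) ⊔ mmVec (mmStar (subM A K K)) d' i ⊔
        mmVec (mmStarLam (subM A K K) lam) zK i := by
      intro i
      simp only [hxdef]
      rw [hu_eq i, hw_eq i]
    have hxle : ∀ j, (lam ⊓ mmVec (mmStar (subM A K K)) c j) ≤ x j := fun j => by
      rw [hx j]; exact le_sup_of_le_left le_sup_left
    have hwle : ∀ j, mmVec (mmStar (subM A K K)) d' j ≤ x j := fun j => by
      rw [hx j]; exact le_sup_of_le_left le_sup_right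
    have hsle : ∀ j, mmVec (mmStarLam (subM A K K) lam) zK j ≤ x j := fun j => by
      rw [hx j]; exact le_sup_right
    constructor
    · intro i
      show mmVec (subM A K K) x i ⊔ bb i = x i
      apply le_antisymm
      · refine sup_le ?_ ?_
        · show (⨆ j, (subM A K K) i j ⊓ x j) ≤ x i
          refine iSup_le fun j => ?_
          rw [hx j, hx i, inf_sup_left, inf_sup_left]
          refine sup_le (sup_le ?_ ?_) ?_
          · refine le_sup_of_le_left (le_sup_of_le_left
              (le_inf (inf_le_right.trans inf_le_left) ?_))
            exact le_trans (inf_le_inf_left _ inf_le_right) (mul_starvec_le c i j)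
          · exact le_sup_of_le_left (le_sup_of_le_right (mul_starvec_le d' i j))
          · exact le_sup_of_le_right (mul_starlamvec_le lam zK i j)
        · refine le_trans (hble i) ?_
          rw [hx i]
          refine sup_le ?_ ?_
          · exact le_sup_of_le_left (le_sup_of_le_left
              (le_inf inf_le_left (inf_le_right.trans (le_starvec c i))))
          · exact le_sup_of_le_left (le_sup_of_le_right (le_starvec d' i))
      · rw [hx i]
        refine sup_le (sup_le ?_ ?_) ?_
        · rw [scalar_starvec]
          refine le_trans (star_unfold (fun k => lam ⊓ c k) i) (sup_le ?_ ?_)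
          · exact le_sup_of_le_right (hcb i)
          · refine le_sup_of_le_left ?_
            refine iSup_le fun j => ?_
            refine le_trans (inf_le_inf_left _
              (le_trans (le_of_eq (scalar_starvec lam c j).symm) (hxle j))) ?_
            exact le_iSup (fun j' => (subM A K K) i j' ⊓ x j') j
        · refine le_trans (star_unfold d' i) (sup_le ?_ ?_)
          · exact le_sup_of_le_right (hd'b i)
          · refine le_sup_of_le_left ?_
            refine iSup_le fun j => ?_
            exact le_trans (inf_le_inf_left _ (hwle j)) (le_iSup (fun j' => (subM A K K) i j' ⊓ x j') j)
        · refine le_sup_of_le_left ?_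
          refine le_trans (starlam_le_mul lam zK i) ?_
          refine iSup_le fun j => ?_
          exact le_trans (inf_le_inf_left _ (hsle j)) (le_iSup (fun j' => (subM A K K) i j' ⊓ x j') j)
    · intro i
      show x i ≤ lam
      rw [hxdef]
      refine sup_le (sup_le inf_le_left ?_) ?_
      · show (⨆ t', mmMul (mmMul (mmStar (subM A K K)) (subM A K (LtilSet A lam K L))) (LamSub lam (LtilSet A lam K L) (LtilSet A lam K L)) i t' ⊓ zLt t') ≤ lam
        refine iSup_le fun t' => inf_le_left.trans ?_
        show (⨆ t, mmMul (mmStar (subM A K K)) (subM A K (LtilSet A lam K L)) i t ⊓ (LamSub lam (LtilSet A lam K L) (LtilSet A lam K L)) t t') ≤ lam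
        exact iSup_le fun t => inf_le_left.trans (hLtcol i t)
      · show (⨆ k, (lam ⊓ mmPlus (subM A K K) k k ⊓ mmStar (subM A K K) i k) ⊓ zK k) ≤ lam
        exact iSup_le fun k => inf_le_left.trans (inf_le_left.trans inf_le_left)
end
end
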